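/- arXiv:1810.06833 — 11 statements merged into one kernel-verified Lean document; each statement's English description precedes it below -/
import Mathlib

section
/- Let f : ℝ^n → ℝ be continuously differentiable on the nonnegative orthant and let γ ≥ 0. If for all x, y in the nonnegative orthant with x ≤ y (coordinatewise) and every coordinate i one has ∂_i f(x) ≥ γ·∂_i f(y), then for all x, y in the nonnegative orthant with x ≤ y, every real k ≥ 0 and every coordinate i, f(x + k·χ_i) − f(x) ≥ γ·(f(y + k·χ_i) − f(y)); that is, f has DR-submodularity ratio at least γ. -/
/-- If a continuously differentiable function on the nonnegative orthant has
`∂_i f(x) ≥ γ·∂_i f(y)` whenever `0 ≤ x ≤ y`, then it has DR-submodularity ratio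
at least `γ`. -/
theorem stmt_0 {n : ℕ} (f : (Fin n → ℝ) → ℝ)
    (f' : (Fin n → ℝ) → ((Fin n → ℝ) →L[ℝ] ℝ))
    (hdiff : ∀ x : Fin n → ℝ, 0 ≤ x → HasFDerivAt f (f' x) x)
    (hcont : ContinuousOn f' {x : Fin n → ℝ | 0 ≤ x})
    (γ : ℝ) (hγ : 0 ≤ γ)
    (hgrad : ∀ x y : Fin n → ℝ, 0 ≤ x → x ≤ y → ∀ i : Fin n,
      f' x ((Pi.single i 1 : Fin n → ℝ)) ≥ γ * f' y ((Pi.single i 1 : Fin n → ℝ))) :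
    ∀ x y : Fin n → ℝ, 0 ≤ x → x ≤ y → ∀ k : ℝ, 0 ≤ k → ∀ i : Fin n,
      f (x + k • (Pi.single i 1 : Fin n → ℝ)) - f x ≥ γ * (f (y + k • (Pi.single i 1 : Fin n → ℝ)) - f y) := by
  intro x y hx hxy k hk i
  set e : Fin n → ℝ := (Pi.single i 1 : Fin n → ℝ) with he_def
  have he : (0 : Fin n → ℝ) ≤ e := by
    intro j
    by_cases h : j = i
    · subst h; simp [he_def]
    · simp [he_def, Pi.single_apply, h]
  have hy : (0 : Fin n → ℝ) ≤ y := le_trans hx hxy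
  -- positions on the two lines
  have hxt : ∀ t : ℝ, 0 ≤ t → (0 : Fin n → ℝ) ≤ x + t • e := by
    intro t ht j
    have h1 : (0:ℝ) ≤ e j := he j
    have h2 : (0:ℝ) ≤ x j := hx j
    show (0:ℝ) ≤ x j + t * e j
    nlinarith
  have hyt : ∀ t : ℝ, 0 ≤ t → (0 : Fin n → ℝ) ≤ y + t • e := by
    intro t ht j
    have h1 : (0:ℝ) ≤ e j := he j
    have h2 : (0:ℝ) ≤ y j := hy j
    show (0:ℝ) ≤ y j + t * e j
    nlinarith
  have hxyt : ∀ t : ℝ, x + t • e ≤ y + t • e := by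
    intro t j
    have := hxy j
    simp only [Pi.add_apply]
    linarith
  -- derivative of the line
  have hline : ∀ (z : Fin n → ℝ) (t : ℝ), HasDerivAt (fun s : ℝ => z + s • e) e t := by
    intro z t
    have h1 : HasDerivAt (fun s : ℝ => s • e) ((1 : ℝ) • e) t :=
      (hasDerivAt_id t).smul_const e
    simpa using h1.const_add z
  set g : ℝ → ℝ := fun t => f (x + t • e) - γ * f (y + t • e) with hg_def
  have hg : ∀ t : ℝ, 0 ≤ t →
      HasDerivAt g (f' (x + t • e) e - γ * f' (y + t • e) e) t := by
    intro t ht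
    have h1 : HasDerivAt (fun s : ℝ => f (x + s • e)) (f' (x + t • e) e) t :=
      (hdiff _ (hxt t ht)).comp_hasDerivAt t (hline x t)
    have h2 : HasDerivAt (fun s : ℝ => f (y + s • e)) (f' (y + t • e) e) t :=
      (hdiff _ (hyt t ht)).comp_hasDerivAt t (hline y t)
    exact h1.sub (h2.const_mul γ)
  have hmono : MonotoneOn g (Set.Icc 0 k) := by
    apply monotoneOn_of_deriv_nonneg (convex_Icc 0 k)
    · intro t ht
      exact (hg t ht.1).continuousAt.continuousWithinAt
    · intro t ht
      rw [interior_Icc] at ht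
      exact (hg t ht.1.le).differentiableAt.differentiableWithinAt
    · intro t ht
      rw [interior_Icc] at ht
      rw [(hg t ht.1.le).deriv]
      have := hgrad (x + t • e) (y + t • e) (hxt t ht.1.le) (hxyt t) i
      rw [← he_def] at this
      linarith
  have hgk : g 0 ≤ g k := hmono ⟨le_refl 0, hk⟩ ⟨hk, le_refl k⟩ hk
  simp only [hg_def, zero_smul, add_zero] at hgk
  linarith
end

section
/- Let f : ℝ^n → ℝ be monotone on the nonnegative orthant with submodularity ratio at least α, where α ≥ 0. Then for all x, y in the nonnegative orthant with x ≤ y (coordinatewise) and every vector v ∈ ℝ^n with v ≥ 0 such that x_i = y_i for every coordinate i with v_i > 0, one has f(x + v) − f(x) ≥ α·(f(y + v) − f(y)). -/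
/-- A monotone function with submodularity ratio at least `α` satisfies the
inequality for arbitrary nonnegative vector increments `v`, provided
`x i = y i` at every coordinate where `v i > 0`. -/
theorem stmt_3 {n : ℕ} (f : (Fin n → ℝ) → ℝ) (α : ℝ) (hα : 0 ≤ α)
    (hmono : ∀ x y : Fin n → ℝ, 0 ≤ x → x ≤ y → f x ≤ f y)
    (hsub : ∀ x y : Fin n → ℝ, 0 ≤ x → x ≤ y → ∀ i : Fin n, x i = y i →
      ∀ k : ℝ, 0 ≤ k →
      f (x + k • (Pi.single i 1 : Fin n → ℝ)) - f x ≥ α * (f (y + k • (Pi.single i 1 : Fin n → ℝ)) - f y)) :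
    ∀ x y v : Fin n → ℝ, 0 ≤ x → x ≤ y → 0 ≤ v →
      (∀ i : Fin n, 0 < v i → x i = y i) →
      f (x + v) - f x ≥ α * (f (y + v) - f y) := by
  intro x y v hx hxy hv hsupp
  have key : ∀ s : Finset (Fin n), ∀ v : Fin n → ℝ, 0 ≤ v →
      (∀ i, 0 < v i → x i = y i) → (∀ i ∉ s, v i = 0) →
      f (x + v) - f x ≥ α * (f (y + v) - f y) := by
    intro s
    induction s using Finset.induction_on with
    | empty =>
      intro v hv hsupp hzero
      have hv0 : v = 0 := funext fun i => hzero i (Finset.notMem_empty i)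
      subst hv0
      simp
    | @insert a s' ha IH =>
      intro v hv hsupp hzero
      by_cases hva : v a = 0
      · exact IH v hv hsupp (fun i hi => by
          by_cases hia : i = a
          · subst hia; exact hva
          · exact hzero i (by simp [hia, hi]))
      · have hva' : 0 < v a := lt_of_le_of_ne (hv a) (Ne.symm hva)
        set v' : Fin n → ℝ := Function.update v a 0 with hv'def
        have hv' : 0 ≤ v' := fun i => by
          by_cases hia : i = a
          · subst hia; simp [v']
          · simpa [v', Function.update_of_ne hia] using hv i
        have hsupp' : ∀ i, 0 < v' i → x i = y i := fun i hi => by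
          by_cases hia : i = a
          · subst hia; simp [v'] at hi
          · exact hsupp i (by simpa [v', Function.update_of_ne hia] using hi)
        have hzero' : ∀ i ∉ s', v' i = 0 := fun i hi => by
          by_cases hia : i = a
          · subst hia; simp [v']
          · rw [hv'def, Function.update_of_ne hia]
            exact hzero i (by simp [hia, hi])
        have heqx : x + v = (x + v') + (v a) • (Pi.single a 1 : Fin n → ℝ) := by
          funext j
          by_cases hja : j = a
          · subst hja; simp [v']
          · simp [v', Function.update_of_ne hja, Pi.single_eq_of_ne hja]
        have heqy : y + v = (y + v') + (v a) • (Pi.single a 1 : Fin n → ℝ) := by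
          funext j
          by_cases hja : j = a
          · subst hja; simp [v']
          · simp [v', Function.update_of_ne hja, Pi.single_eq_of_ne hja]
        have hx' : 0 ≤ x + v' := fun i => add_nonneg (hx i) (hv' i)
        have hxy' : x + v' ≤ y + v' := fun i => add_le_add (hxy i) le_rfl
        have hxa : (x + v') a = (y + v') a := by
          simp only [Pi.add_apply]
          rw [hsupp a hva']
        have h1 := hsub (x + v') (y + v') hx' hxy' a hxa (v a) (hv a)
        have h2 := IH v' hv' hsupp' hzero'
        rw [heqx, heqy]
        nlinarith [h1, h2]
  exact key Finset.univ v hv hsupp (fun i hi => absurd (Finset.mem_univ i) hi)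
end

section
/- (Lemma 2) Let f : ℝ^n → ℝ be monotone on the nonnegative orthant with DR-submodularity ratio at least β, where 0 < β ≤ 1. Let 𝓔 ⊆ ℝ^n be a set of nonnegative vectors, let l be a positive integer, let e_1, …, e_l ∈ 𝓔 (repetitions allowed) and let v* = e_1 + ⋯ + e_l. Then for every x in the nonnegative orthant there exists e* ∈ {e_1, …, e_l} ⊆ 𝓔 such that f(x + e*) − f(x) ≥ (β/l)·(f(v*) − f(x)). -/
theorem dr_vec {n : ℕ} (f : (Fin n → ℝ) → ℝ) (β : ℝ)
    (hDR : ∀ x y : Fin n → ℝ, 0 ≤ x → x ≤ y → ∀ k : ℝ, 0 ≤ k → ∀ i : Fin n,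
      f (x + k • (Pi.single i 1 : Fin n → ℝ)) - f x ≥ β * (f (y + k • (Pi.single i 1 : Fin n → ℝ)) - f y))
    (x y d : Fin n → ℝ) (hx : 0 ≤ x) (hxy : x ≤ y) (hd : 0 ≤ d) :
    f (x + d) - f x ≥ β * (f (y + d) - f y) := by
  have key : ∀ s : Finset (Fin n),
      f (x + fun i => if i ∈ s then d i else 0) - f x
        ≥ β * (f (y + fun i => if i ∈ s then d i else 0) - f y) := by
    intro s
    induction s using Finset.induction_on with
    | empty =>
      simp [show (fun _ : Fin n => (0:ℝ)) = 0 from rfl]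
    | @insert i s hi ih =>
      set ds : Fin n → ℝ := fun j => if j ∈ s then d j else 0 with hds
      have hds0 : 0 ≤ ds := by
        intro j
        by_cases hj : j ∈ s
        · simpa [hds, hj] using hd j
        · simp [hds, hj]
      have heq : (fun j => if j ∈ insert i s then d j else 0)
          = ds + d i • (Pi.single i 1 : Fin n → ℝ) := by
        funext j
        by_cases hji : j = i
        · subst hji
          simp [hds, hi, Pi.single_apply]
        · simp [hds, hji, Pi.single_apply]
      rw [heq]
      have h1 := hDR (x + ds) (y + ds) (by positivity)
        (by intro j; exact add_le_add (hxy j) le_rfl) (d i) (hd i) i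
      have hx' : x + (ds + d i • (Pi.single i 1 : Fin n → ℝ))
          = (x + ds) + d i • (Pi.single i 1 : Fin n → ℝ) := by abel
      have hy' : y + (ds + d i • (Pi.single i 1 : Fin n → ℝ))
          = (y + ds) + d i • (Pi.single i 1 : Fin n → ℝ) := by abel
      rw [hx', hy']
      nlinarith [h1, ih]
  have h := key Finset.univ
  simpa using h

/-- Lemma 2: if `v* = e 1 + ⋯ + e l` with each `e j` a nonnegative member of `𝓔`,
then for any nonnegative `x` some `e j` brings an improvement proportional to the
current distance to `f v*`. -/
theorem stmt_4 {n : ℕ} (f : (Fin n → ℝ) → ℝ) (β : ℝ) (hβ0 : 0 < β) (hβ1 : β ≤ 1)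
    (hmono : ∀ x y : Fin n → ℝ, 0 ≤ x → x ≤ y → f x ≤ f y)
    (hDR : ∀ x y : Fin n → ℝ, 0 ≤ x → x ≤ y → ∀ k : ℝ, 0 ≤ k → ∀ i : Fin n,
      f (x + k • (Pi.single i 1 : Fin n → ℝ)) - f x ≥ β * (f (y + k • (Pi.single i 1 : Fin n → ℝ)) - f y))
    (E : Set (Fin n → ℝ)) (hE : ∀ e ∈ E, 0 ≤ e)
    (l : ℕ) (hl : 0 < l)
    (e : Fin l → Fin n → ℝ) (he : ∀ j, e j ∈ E)
    (x : Fin n → ℝ) (hx : 0 ≤ x) :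
    ∃ j : Fin l, f (x + e j) - f x ≥ (β / l) * (f (∑ j, e j) - f x) := by
  have he0 : ∀ j, 0 ≤ e j := fun j => hE _ (he j)
  by_contra h
  push_neg at h
  have hsum : ∀ s : Finset (Fin l),
      β * (f (x + ∑ j ∈ s, e j) - f x) ≤ ∑ j ∈ s, (f (x + e j) - f x) := by
    intro s
    induction s using Finset.induction_on with
    | empty => simp
    | @insert j s hj ih =>
      rw [Finset.sum_insert hj, Finset.sum_insert hj]
      have hS : 0 ≤ ∑ k ∈ s, e k := Finset.sum_nonneg fun k _ => he0 k
      have h1 := dr_vec f β hDR x (x + ∑ k ∈ s, e k) (e j) hx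
        (le_add_of_nonneg_right hS) (he0 j)
      have hre : x + (e j + ∑ k ∈ s, e k) = (x + ∑ k ∈ s, e k) + e j := by abel
      rw [hre]
      nlinarith [h1, ih]
  have hfin := hsum Finset.univ
  haveI : Nonempty (Fin l) := ⟨⟨0, hl⟩⟩
  have hstrict : ∑ j : Fin l, (f (x + e j) - f x)
      < ∑ _j : Fin l, (β / l) * (f (∑ j, e j) - f x) :=
    Finset.sum_lt_sum_of_nonempty Finset.univ_nonempty fun j _ => h j
  have hcard : ∑ _j : Fin l, (β / l) * (f (∑ j, e j) - f x)
      = β * (f (∑ j, e j) - f x) := by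
    rw [Finset.sum_const, Finset.card_univ, Fintype.card_fin, nsmul_eq_mul]
    field_simp
  have hmono' : f (∑ j, e j) ≤ f (x + ∑ j, e j) :=
    hmono _ _ (Finset.sum_nonneg fun k _ => he0 k) (le_add_of_nonneg_left hx)
  nlinarith [hfin, hstrict, hcard, hmono', hβ0]
end

section
/- (Lemma 3) Let P ⊆ ℝ^n be a convex set. Let x_1, …, x_m ∈ P and let θ_1, …, θ_m be strictly positive reals with θ_1 + ⋯ + θ_m = 1. If the point x' = θ_1·x_1 + ⋯ + θ_m·x_m belongs to Frontier(P), then the convex hull of {x_1, …, x_m} is contained in Frontier(P). -/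
/-- The set of maximal elements of `S` for the coordinatewise partial order. -/
def maxFrontier {n : ℕ} (S : Set (Fin n → ℝ)) : Set (Fin n → ℝ) :=
  {x | x ∈ S ∧ ¬ ∃ y ∈ S, x ≤ y ∧ x ≠ y}

/-- Lemma 3: if a strictly positive convex combination of points of a convex set `P`
lies in `Frontier(P)`, then the whole convex hull of those points lies in
`Frontier(P)`. -/
theorem stmt_5 {n m : ℕ} (P : Set (Fin n → ℝ)) (hP : Convex ℝ P)
    (x : Fin m → Fin n → ℝ) (hx : ∀ i, x i ∈ P)
    (θ : Fin m → ℝ) (hθ : ∀ i, 0 < θ i) (hsum : ∑ i, θ i = 1)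
    (hfront : (∑ i, θ i • x i) ∈ maxFrontier P) :
    convexHull ℝ (Set.range x) ⊆ maxFrontier P := by
  have hm : Nonempty (Fin m) := by
    by_contra h
    rw [not_nonempty_iff] at h
    simp [Finset.univ_eq_empty] at hsum
  -- the minimum weight
  set t : ℝ := Finset.univ.inf' (Finset.univ_nonempty) θ with ht
  have htpos : 0 < t := by
    rw [ht]
    exact (Finset.lt_inf'_iff _).2 fun i _ => hθ i
  have htle : ∀ i, t ≤ θ i := fun i => Finset.inf'_le _ (Finset.mem_univ i)
  -- key claim: every convex combination of the x i is maximal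
  have key : ∀ c : Fin m → ℝ, (∀ i, 0 ≤ c i) → ∑ i, c i = 1 →
      (∑ i, c i • x i) ∈ maxFrontier P := by
    intro c hc hcsum
    set p : Fin n → ℝ := ∑ i, c i • x i with hp
    have hpP : p ∈ P := hP.sum_mem (fun i _ => hc i) hcsum (fun i _ => hx i)
    refine ⟨hpP, ?_⟩
    rintro ⟨y, hyP, hle, hne⟩
    have hcle1 : ∀ i, c i ≤ 1 := by
      intro i
      rw [← hcsum]
      exact Finset.single_le_sum (fun j _ => hc j) (Finset.mem_univ i)
    -- build the new point z
    set w : Option (Fin m) → ℝ := fun o => o.elim t (fun i => θ i - t * c i) with hw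
    set g : Option (Fin m) → (Fin n → ℝ) := fun o => o.elim y x with hg
    have hw0 : ∀ o, 0 ≤ w o := by
      rintro (_ | i)
      · exact htpos.le
      · simp only [hw, Option.elim]
        have : t * c i ≤ θ i := by
          calc t * c i ≤ t * 1 := by nlinarith [hc i, hcle1 i]
          _ = t := mul_one t
          _ ≤ θ i := htle i
        linarith
    have hwsum : ∑ o : Option (Fin m), w o = 1 := by
      rw [Fintype.sum_option]
      simp only [hw, Option.elim]
      rw [Finset.sum_sub_distrib, ← Finset.mul_sum, hsum, hcsum]
      ring
    set z : Fin n → ℝ := ∑ o : Option (Fin m), w o • g o with hz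
    have hzP : z ∈ P := hP.sum_mem (fun o _ => hw0 o) hwsum (by
      rintro (_ | i) _
      · exact hyP
      · simpa [hg] using hx i)
    have hzeq : z = (∑ i, θ i • x i) + t • (y - p) := by
      rw [hz, Fintype.sum_option]
      simp only [hw, hg, Option.elim, hp]
      rw [smul_sub, Finset.smul_sum]
      have : ∀ i : Fin m, (θ i - t * c i) • x i = θ i • x i - t • c i • x i := by
        intro i
        rw [sub_smul, smul_smul]
      rw [Finset.sum_congr rfl (fun i _ => this i), Finset.sum_sub_distrib]
      abel
    have hle' : (∑ i, θ i • x i) ≤ z := by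
      rw [hzeq]
      intro j
      simp only [Pi.add_apply, Pi.smul_apply, Pi.sub_apply, smul_eq_mul]
      nlinarith [hle j, htpos]
    have hne' : (∑ i, θ i • x i) ≠ z := by
      rw [hzeq]
      intro h
      have : t • (y - p) = 0 := by
        have := congrArg (fun v => v - (∑ i, θ i • x i)) h
        simpa using this.symm
      rcases smul_eq_zero.1 this with h' | h'
      · exact htpos.ne' h'
      · exact hne (sub_eq_zero.1 h').symm
    exact hfront.2 ⟨z, hzP, hle', hne'⟩
  -- now handle arbitrary elements of the convex hull
  intro p hpmem
  rw [convexHull_range_eq_exists_affineCombination] at hpmem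
  obtain ⟨s, w', hw'0, hw'sum, hpeq⟩ := hpmem
  set c : Fin m → ℝ := fun i => if i ∈ s then w' i else 0 with hc
  have hc0 : ∀ i, 0 ≤ c i := by
    intro i
    simp only [hc]
    split
    · exact hw'0 _ ‹_›
    · exact le_refl 0
  have hcsum : ∑ i, c i = 1 := by
    rw [hc, Finset.sum_ite_mem, Finset.univ_inter, hw'sum]
  have hpc : p = ∑ i, c i • x i := by
    rw [← hpeq, Finset.affineCombination_eq_linear_combination _ _ _ hw'sum]
    rw [hc]
    simp [Finset.sum_ite_mem]
  rw [hpc]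
  exact key c hc0 hcsum
end

section
/- (Lemma 4) Let E ⊆ ℝ^n be a finite nonempty set of nonnegative vectors, P = conv(E) its convex hull, l a positive integer, 𝓔 = {(1/l)·x : x ∈ Frontier(E)}, and m = |Frontier(E)|. Let D ≥ 0 satisfy ‖x‖ ≤ D for all x ∈ P, and let x* ∈ Frontier(P). Then there exist e'_1, …, e'_l ∈ 𝓔 (repetitions allowed) such that v' = e'_1 + ⋯ + e'_l belongs to Frontier(P) and ‖x* − v'‖ ≤ m·D/l. -/
/-- Euclidean norm on `Fin n → ℝ`. -/
noncomputable def enorm {n : ℕ} (x : Fin n → ℝ) : ℝ :=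
  Real.sqrt (∑ i, (x i) ^ 2)


lemma enorm_eq_norm {n : ℕ} (x : Fin n → ℝ) :
    _root_.enorm x = ‖(WithLp.linearEquiv 2 ℝ (Fin n → ℝ)).symm x‖ := by
  rw [show ((WithLp.linearEquiv 2 ℝ (Fin n → ℝ)).symm x : EuclideanSpace ℝ (Fin n)) =
    (WithLp.equiv 2 (Fin n → ℝ)).symm x from rfl, EuclideanSpace.norm_eq]
  unfold _root_.enorm
  congr 1
  refine Finset.sum_congr rfl fun i _ => ?_
  rw [show ((WithLp.equiv 2 (Fin n → ℝ)).symm x).ofLp i = x i from rfl, Real.norm_eq_abs, sq_abs]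

lemma enorm_nonneg {n : ℕ} (x : Fin n → ℝ) : 0 ≤ _root_.enorm x := Real.sqrt_nonneg _

lemma enorm_smul_euc {n : ℕ} (c : ℝ) (x : Fin n → ℝ) : _root_.enorm (c • x) = |c| * _root_.enorm x := by
  rw [enorm_eq_norm, map_smul, norm_smul, Real.norm_eq_abs, enorm_eq_norm]

lemma enorm_sum_le_euc {n : ℕ} {ι : Type*} (S : Finset ι) (g : ι → Fin n → ℝ) :
    _root_.enorm (∑ e ∈ S, g e) ≤ ∑ e ∈ S, _root_.enorm (g e) := by
  rw [enorm_eq_norm, map_sum]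
  refine (norm_sum_le _ _).trans (le_of_eq ?_)
  exact Finset.sum_congr rfl fun e _ => (enorm_eq_norm _).symm


lemma round_exists (s l : ℕ) (hl : 0 < l) (lam : Fin s → ℝ)
    (h0 : ∀ i, 0 ≤ lam i) (h1 : ∑ i, lam i = 1) :
    ∃ k : Fin s → ℕ, (∑ i, k i) = l ∧ ∀ i, |(k i : ℝ) - l * lam i| ≤ 1 := by
  have hs : s ≠ 0 := by
    rintro rfl
    simp at h1
  set F : Fin s → ℕ := fun i => ⌊(l : ℝ) * lam i⌋₊ with hF
  have hFle : ∀ i, (F i : ℝ) ≤ (l : ℝ) * lam i := fun i =>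
    Nat.floor_le (mul_nonneg (Nat.cast_nonneg _) (h0 i))
  have hFlt : ∀ i, (l : ℝ) * lam i < (F i : ℝ) + 1 := fun i => Nat.lt_floor_add_one _
  have hsum : ∑ i, (l : ℝ) * lam i = l := by rw [← Finset.mul_sum, h1, mul_one]
  have hle : ∑ i, F i ≤ l := by
    have : ((∑ i, F i : ℕ) : ℝ) ≤ (l : ℝ) := by
      push_cast
      rw [← hsum]
      exact Finset.sum_le_sum fun i _ => hFle i
    exact_mod_cast this
  have hlt : l < (∑ i, F i) + s := by
    have : (l : ℝ) < ((∑ i, F i) + s : ℕ) := by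
      push_cast
      rw [← hsum]
      calc ∑ i, (l:ℝ) * lam i < ∑ i : Fin s, ((F i : ℝ) + 1) :=
            Finset.sum_lt_sum_of_nonempty (Finset.univ_nonempty_iff.mpr (Fin.pos_iff_nonempty.mp (Nat.pos_of_ne_zero hs)))
              (fun i _ => hFlt i)
        _ = ∑ i : Fin s, (F i : ℝ) + s := by
            rw [Finset.sum_add_distrib, Finset.sum_const, Finset.card_univ, Fintype.card_fin,
              nsmul_eq_mul, mul_one]
    exact_mod_cast this
  set r : ℕ := l - ∑ i, F i with hr
  have hrle : r ≤ (Finset.univ : Finset (Fin s)).card := by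
    simp only [Finset.card_univ, Fintype.card_fin]
    omega
  obtain ⟨R, hRsub, hRcard⟩ := Finset.exists_subset_card_eq hrle
  refine ⟨fun i => F i + (if i ∈ R then 1 else 0), ?_, ?_⟩
  · rw [Finset.sum_add_distrib, Finset.sum_ite_mem, Finset.univ_inter, Finset.sum_const,
      hRcard, smul_eq_mul, mul_one]
    omega
  · intro i
    rw [abs_le]
    have h1' := hFle i
    have h2' := hFlt i
    simp only []
    split_ifs with h <;> push_cast <;> constructor <;> linarith

lemma key_max {n : ℕ} (E : Set (Fin n → ℝ)) (hfin : E.Finite)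
    (xstar : Fin n → ℝ) (hxs : xstar ∈ maxFrontier (convexHull ℝ E))
    {ι : Type} [Fintype ι] (f : ι → Fin n → ℝ) (lam : ι → ℝ)
    (hfE : ∀ i, f i ∈ E) (hlam : ∀ i, 0 < lam i) (hlam1 : ∑ i, lam i = 1)
    (hx : ∑ i, lam i • f i = xstar)
    (μ : ι → ℝ) (hμ0 : ∀ i, 0 ≤ μ i) (hμ1 : ∑ i, μ i = 1) :
    (∑ i, μ i • f i) ∈ maxFrontier (convexHull ℝ E) := by
  classical
  set y := ∑ i, μ i • f i with hy
  have hyP : y ∈ convexHull ℝ E :=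
    mem_convexHull_of_exists_fintype μ f hμ0 hμ1 hfE rfl
  refine ⟨hyP, ?_⟩
  rintro ⟨z, hzP, hyz, hyne⟩
  have hιne : Nonempty ι := by
    by_contra h
    rw [not_nonempty_iff] at h
    rw [Finset.univ_eq_empty, Finset.sum_empty] at hlam1
    norm_num at hlam1
  obtain ⟨i0, -, hi0⟩ := Finset.exists_min_image Finset.univ lam Finset.univ_nonempty
  set ε := lam i0 with hε
  have hε0 : 0 < ε := hlam i0
  have hμle1 : ∀ i, μ i ≤ 1 := by
    intro i
    rw [← hμ1]
    exact Finset.single_le_sum (fun j _ => hμ0 j) (Finset.mem_univ i)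
  have hcoef : ∀ i, 0 ≤ lam i - ε * μ i := by
    intro i
    have h1 : ε * μ i ≤ ε * 1 := by
      apply mul_le_mul_of_nonneg_left (hμle1 i) hε0.le
    have h2 : ε ≤ lam i := hi0 i (Finset.mem_univ i)
    linarith
  -- representation of z
  have hz' : z ∈ convexHull ℝ (↑hfin.toFinset : Set (Fin n → ℝ)) := by
    rwa [hfin.coe_toFinset]
  obtain ⟨ν, hν0, hν1, hνz⟩ := Finset.mem_convexHull'.mp hz'
  set x'' := xstar + ε • (z - y) with hx''
  have hx''P : x'' ∈ convexHull ℝ E := by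
    refine mem_convexHull_of_exists_fintype (ι := ι ⊕ ↥hfin.toFinset)
      (Sum.elim (fun i => lam i - ε * μ i) (fun e => ε * ν e))
      (Sum.elim f (fun e => (e : Fin n → ℝ))) ?_ ?_ ?_ ?_
    · rintro (i | e)
      · exact hcoef i
      · exact mul_nonneg hε0.le (hν0 _ (Finset.coe_mem e))
    · rw [Fintype.sum_sum_type]
      simp only [Sum.elim_inl, Sum.elim_inr]
      rw [← Finset.mul_sum, Finset.sum_coe_sort _ ν, hν1,
        Finset.sum_sub_distrib, hlam1, ← Finset.mul_sum, hμ1]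
      ring
    · rintro (i | e)
      · exact hfE i
      · have := Finset.coe_mem e
        rwa [Set.Finite.mem_toFinset] at this
    · rw [Fintype.sum_sum_type]
      simp only [Sum.elim_inl, Sum.elim_inr]
      have e1 : ∑ i, (lam i - ε * μ i) • f i = xstar - ε • y := by
        rw [hy, ← hx, Finset.smul_sum, ← Finset.sum_sub_distrib]
        refine Finset.sum_congr rfl fun i _ => ?_
        rw [sub_smul, mul_smul]
      have e2 : ∑ e : ↥hfin.toFinset, (ε * ν ↑e) • (e : Fin n → ℝ) = ε • z := by
        rw [← hνz, Finset.smul_sum, ← Finset.sum_coe_sort hfin.toFinset (fun x => ε • ν x • x)]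
        refine Finset.sum_congr rfl fun e _ => ?_
        rw [smul_smul]
      rw [e1, e2, hx'', smul_sub]
      abel
  refine hxs.2 ⟨x'', hx''P, ?_, ?_⟩
  · intro j
    have := hyz j
    have : 0 ≤ ε * (z j - y j) := mul_nonneg hε0.le (by linarith)
    simp only [hx'', Pi.add_apply, Pi.smul_apply, Pi.sub_apply, smul_eq_mul]
    linarith
  · intro h
    apply hyne
    have h2 : ε • (z - y) = 0 := by
      have := congrArg (fun u => u - xstar) h
      simpa [hx''] using this.symm
    rcases smul_eq_zero.mp h2 with h3 | h3
    · exact absurd h3 hε0.ne'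
    · exact (sub_eq_zero.mp h3).symm


lemma sum_enum {α : Type*} {M : Type*} [AddCommMonoid M] (S : Finset α)
    (φ : ↥S ≃ Fin S.card) (g : α → M) :
    ∑ e ∈ S, g e = ∑ i, g ↑(φ.symm i) := by
  rw [← Finset.sum_coe_sort S g, ← Equiv.sum_comp φ.symm (fun x : ↥S => g ↑x)]

/-- Lemma 4: any `x* ∈ Frontier(conv E)` can be approximated within `m·D/l` by a sum
`v'` of `l` elements of `𝓔 = (1/l)·Frontier(E)` with `v' ∈ Frontier(conv E)`. -/
theorem stmt_7 {n : ℕ} (E : Set (Fin n → ℝ)) (hfin : E.Finite) (hne : E.Nonempty)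
    (hpos : ∀ v ∈ E, 0 ≤ v)
    (l : ℕ) (hl : 0 < l)
    (m : ℕ) (hm : m = (maxFrontier E).ncard)
    (D : ℝ) (hD : 0 ≤ D) (hDb : ∀ x ∈ convexHull ℝ E, _root_.enorm x ≤ D)
    (xstar : Fin n → ℝ) (hxs : xstar ∈ maxFrontier (convexHull ℝ E)) :
    ∃ e' : Fin l → Fin n → ℝ,
      (∀ j, e' j ∈ (fun v : Fin n → ℝ => (l : ℝ)⁻¹ • v) '' maxFrontier E) ∧
      (∑ j, e' j) ∈ maxFrontier (convexHull ℝ E) ∧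
      _root_.enorm (xstar - ∑ j, e' j) ≤ m * D / l := by
  classical
  have hl0 : (0 : ℝ) < l := by exact_mod_cast hl
  have hx1' : xstar ∈ convexHull ℝ (↑hfin.toFinset : Set (Fin n → ℝ)) := by
    rw [hfin.coe_toFinset]; exact hxs.1
  obtain ⟨w, hw0, hw1, hwx⟩ := Finset.mem_convexHull'.mp hx1'
  set S : Finset (Fin n → ℝ) := hfin.toFinset.filter (fun e => 0 < w e) with hSdef
  have hS1 : ∑ e ∈ S, w e = 1 := by
    rw [hSdef, Finset.sum_filter_of_ne (fun x hx hne => lt_of_le_of_ne (hw0 x hx) (Ne.symm hne)),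
      hw1]
  have hSx : ∑ e ∈ S, w e • e = xstar := by
    rw [hSdef, Finset.sum_filter_of_ne, hwx]
    intro x hx hne
    rcases eq_or_lt_of_le (hw0 x hx) with h | h
    · exact absurd (by rw [← h, zero_smul]) hne
    · exact h
  set s := S.card with hs
  set φ : ↥S ≃ Fin s := Fintype.equivFinOfCardEq (Fintype.card_coe S) with hφ
  set f : Fin s → (Fin n → ℝ) := fun i => ↑(φ.symm i) with hf
  have hfS : ∀ i, f i ∈ S := fun i => (φ.symm i).2
  set lam : Fin s → ℝ := fun i => w (f i) with hlamdef
  have hlam : ∀ i, 0 < lam i := fun i => (Finset.mem_filter.mp (hfS i)).2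
  have hlam1 : ∑ i, lam i = 1 := by rw [← sum_enum S φ w, hS1]
  have hfx : ∑ i, lam i • f i = xstar := by
    rw [← sum_enum S φ (fun e => w e • e), hSx]
  have hfE : ∀ i, f i ∈ E := by
    intro i
    have := (Finset.mem_filter.mp (hfS i)).1
    rwa [Set.Finite.mem_toFinset] at this
  have key : ∀ μ : Fin s → ℝ, (∀ i, 0 ≤ μ i) → ∑ i, μ i = 1 →
      (∑ i, μ i • f i) ∈ maxFrontier (convexHull ℝ E) :=
    fun μ h0 h1 => key_max E hfin xstar hxs f lam hfE hlam hlam1 hfx μ h0 h1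
  have hfME : ∀ i, f i ∈ maxFrontier E := by
    intro i
    have h1 : (∑ j, (if j = i then (1:ℝ) else 0) • f j) ∈ maxFrontier (convexHull ℝ E) := by
      refine key _ (fun j => by positivity) (by simp)
    have h2 : ∑ j, (if j = i then (1:ℝ) else 0) • f j = f i := by simp
    rw [h2] at h1
    refine ⟨hfE i, ?_⟩
    rintro ⟨y, hyE, hle, hne⟩
    exact h1.2 ⟨y, subset_convexHull ℝ E hyE, hle, hne⟩
  have hsm : s ≤ m := by
    rw [hm]
    have hsub : ↑S ⊆ maxFrontier E := by
      intro e he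
      have : e = f (φ ⟨e, he⟩) := by simp [hf]
      rw [this]; exact hfME _
    calc s = (↑S : Set (Fin n → ℝ)).ncard := (Set.ncard_coe_finset S).symm
      _ ≤ (maxFrontier E).ncard :=
        Set.ncard_le_ncard hsub (hfin.subset (fun x hx => hx.1))
  obtain ⟨k, hk1, hk2⟩ := round_exists s l hl lam (fun i => (hlam i).le) hlam1
  have hcard : Fintype.card (Σ i : Fin s, Fin (k i)) = l := by
    simp only [Fintype.card_sigma, Fintype.card_fin]
    exact hk1
  set σ : (Σ i : Fin s, Fin (k i)) ≃ Fin l := Fintype.equivFinOfCardEq hcard with hσ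
  have htot : (∑ j : Fin l, (l : ℝ)⁻¹ • f (σ.symm j).1) = ∑ i, ((k i : ℝ) / l) • f i := by
    rw [← Equiv.sum_comp σ (fun j => (l : ℝ)⁻¹ • f (σ.symm j).1)]
    simp only [Equiv.symm_apply_apply]
    rw [← Finset.univ_sigma_univ, Finset.sum_sigma]
    refine Finset.sum_congr rfl fun i _ => ?_
    dsimp only
    rw [Finset.sum_const, Finset.card_univ, Fintype.card_fin, ← Nat.cast_smul_eq_nsmul ℝ,
      smul_smul, div_eq_mul_inv, mul_comm]
  refine ⟨fun j => (l : ℝ)⁻¹ • f (σ.symm j).1, ?_, ?_, ?_⟩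
  · intro j
    exact ⟨f (σ.symm j).1, hfME _, rfl⟩
  · show (∑ j : Fin l, (l : ℝ)⁻¹ • f (σ.symm j).1) ∈ maxFrontier (convexHull ℝ E)
    rw [htot]
    refine key _ (fun i => by positivity) ?_
    rw [← Finset.sum_div]
    rw [show (∑ i, (k i : ℝ)) = ((∑ i, k i : ℕ) : ℝ) by push_cast; ring, hk1]
    field_simp
  · show _root_.enorm (xstar - ∑ j : Fin l, (l : ℝ)⁻¹ • f (σ.symm j).1) ≤ m * D / l
    rw [htot]
    have hdiff : xstar - ∑ i, ((k i : ℝ) / l) • f i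
        = ∑ i, (lam i - (k i : ℝ) / l) • f i := by
      rw [← hfx, ← Finset.sum_sub_distrib]
      exact Finset.sum_congr rfl fun i _ => (sub_smul _ _ _).symm
    rw [hdiff]
    have hterm : ∀ i : Fin s, _root_.enorm ((lam i - (k i : ℝ) / l) • f i) ≤ 1 / l * D := by
      intro i
      rw [enorm_smul_euc]
      have h1 : |lam i - (k i : ℝ) / l| ≤ 1 / l := by
        have e : lam i - (k i : ℝ) / l = -(((k i : ℝ) - l * lam i) / l) := by
          field_simp
          ring
        rw [e, abs_neg, abs_div, abs_of_pos hl0]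
        gcongr
        exact hk2 i
      have h2 : _root_.enorm (f i) ≤ D := hDb _ (subset_convexHull ℝ E (hfE i))
      exact mul_le_mul h1 h2 (enorm_nonneg _) (by positivity)
    calc _root_.enorm (∑ i, (lam i - (k i : ℝ) / l) • f i)
        ≤ ∑ i : Fin s, _root_.enorm ((lam i - (k i : ℝ) / l) • f i) := enorm_sum_le_euc _ _
      _ ≤ ∑ _i : Fin s, 1 / l * D := Finset.sum_le_sum fun i _ => hterm i
      _ = s * (1 / l * D) := by
          rw [Finset.sum_const, Finset.card_univ, Fintype.card_fin, nsmul_eq_mul]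
      _ = s * D / l := by ring
      _ ≤ m * D / l := by
          have hsm' : (s : ℝ) ≤ (m : ℝ) := by exact_mod_cast hsm
          gcongr
end

section
/- (Theorem 1, guarantee of the LDGM greedy iteration) Let E ⊆ ℝ^n be a finite nonempty set of nonnegative vectors, P = conv(E), l a positive integer, 𝓔 = {(1/l)·x : x ∈ Frontier(E)}, and m = |Frontier(E)|. Let 0 < β ≤ 1 and let f : ℝ^n → ℝ satisfy f(0) = 0, be monotone on the nonnegative orthant, and have DR-submodularity ratio at least β. Assume L ≥ 0 satisfies |f(x) − f(y)| ≤ L·‖x − y‖ for all x, y ∈ Frontier(P); assume D ≥ 0 satisfies ‖x‖ ≤ D for all x ∈ P; and assume x* ∈ Frontier(P) satisfies f(x*) ≥ f(y) for all y ∈ P. Define the greedy sequence x_0 = 0 and, for each 0 ≤ t < l, x_{t+1} = x_t + e_t where e_t ∈ 𝓔 satisfies f(x_t + e_t) ≥ f(x_t + e) for all e ∈ 𝓔. Then f(x_l) ≥ (1 − e^{−β})·f(x*) − (1 − e^{−β})·m·D·L/l. -/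
/-- Euclidean norm on `Fin n → ℝ`. -/
noncomputable def euclidNorm {n : ℕ} (x : Fin n → ℝ) : ℝ :=
  Real.sqrt (∑ i, (x i) ^ 2)

lemma euclidNorm_eq_norm {n : ℕ} (x : Fin n → ℝ) :
    euclidNorm x = ‖(WithLp.equiv 2 (Fin n → ℝ)).symm x‖ := by
  rw [euclidNorm, EuclideanSpace.norm_eq]
  refine congrArg Real.sqrt (Finset.sum_congr rfl fun i _ => ?_)
  simp [Real.norm_eq_abs, sq_abs]

lemma euclidNorm_smul' {n : ℕ} (c : ℝ) (v : Fin n → ℝ) : euclidNorm (c • v) = |c| * euclidNorm v := by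
  simp only [euclidNorm_eq_norm]
  rw [show (WithLp.equiv 2 (Fin n → ℝ)).symm (c • v)
      = c • (WithLp.equiv 2 (Fin n → ℝ)).symm v from rfl]
  rw [norm_smul, Real.norm_eq_abs]

lemma euclidNorm_sum_le {n : ℕ} {ι : Type*} (s : Finset ι) (g : ι → Fin n → ℝ) :
    euclidNorm (∑ v ∈ s, g v) ≤ ∑ v ∈ s, euclidNorm (g v) := by
  simp only [euclidNorm_eq_norm]
  rw [show (WithLp.equiv 2 (Fin n → ℝ)).symm (∑ v ∈ s, g v)
      = ∑ v ∈ s, (WithLp.equiv 2 (Fin n → ℝ)).symm (g v) from WithLp.toLp_sum 2 (Fin n → ℝ) s g]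
  exact norm_sum_le _ _

lemma round_exists_s8 {V : Type*} [DecidableEq V] (s : Finset V) (a : V → ℕ) (b : V → ℕ)
    (hab : ∀ v ∈ s, a v ≤ b v) (N : ℕ)
    (h1 : ∑ v ∈ s, a v ≤ N) (h2 : N ≤ ∑ v ∈ s, b v) :
    ∃ k : V → ℕ, ∑ v ∈ s, k v = N ∧ ∀ v ∈ s, a v ≤ k v ∧ k v ≤ b v := by
  induction s using Finset.induction generalizing N with
  | empty =>
      simp only [Finset.sum_empty] at h1 h2
      exact ⟨fun _ => 0, by simp; omega, by simp⟩
  | @insert v s hv ih =>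
      simp only [Finset.sum_insert hv] at h1 h2
      have hSab : ∑ u ∈ s, a u ≤ ∑ u ∈ s, b u :=
        Finset.sum_le_sum (fun u hu => hab u (Finset.mem_insert_of_mem hu))
      have hav : a v ≤ b v := hab v (Finset.mem_insert_self _ _)
      have hex : ∃ kv, kv ≤ N ∧ a v ≤ kv ∧ kv ≤ b v ∧
          ∑ u ∈ s, a u ≤ N - kv ∧ N - kv ≤ ∑ u ∈ s, b u := by
        rcases le_total (b v) (N - ∑ u ∈ s, a u) with h | h
        · exact ⟨b v, by omega, by omega, le_refl _, by omega, by omega⟩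
        · exact ⟨max (a v) (N - ∑ u ∈ s, a u), by omega, le_max_left _ _, by omega,
            by omega, by omega⟩
      obtain ⟨kv, hkvle, hkva, hkvb, hr1, hr2⟩ := hex
      obtain ⟨k, hks, hkb⟩ := ih (fun u hu => hab u (Finset.mem_insert_of_mem hu)) (N - kv) hr1 hr2
      refine ⟨Function.update k v kv, ?_, ?_⟩
      · rw [Finset.sum_insert hv, Function.update_self]
        rw [Finset.sum_congr rfl (fun u hu => Function.update_of_ne (ne_of_mem_of_not_mem hu hv) _ _)]
        omega
      · intro u hu
        rcases Finset.mem_insert.mp hu with rfl | hu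
        · simp [Function.update_self, hkva, hkvb]
        · rw [Function.update_of_ne (ne_of_mem_of_not_mem hu hv)]
          exact hkb u hu

lemma vecDR {n : ℕ} (f : (Fin n → ℝ) → ℝ) (β : ℝ)
    (hDR : ∀ x y : Fin n → ℝ, 0 ≤ x → x ≤ y → ∀ k : ℝ, 0 ≤ k → ∀ i : Fin n,
      f (x + k • (Pi.single i 1 : Fin n → ℝ)) - f x ≥ β * (f (y + k • (Pi.single i 1 : Fin n → ℝ)) - f y))
    (a b w : Fin n → ℝ) (ha : 0 ≤ a) (hab : a ≤ b) (hw : 0 ≤ w) :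
    β * (f (b + w) - f b) ≤ f (a + w) - f a := by
  have key : ∀ s : Finset (Fin n),
      β * (f (b + fun i => if i ∈ s then w i else 0) - f b)
        ≤ f (a + fun i => if i ∈ s then w i else 0) - f a := by
    intro s
    induction s using Finset.induction with
    | empty =>
        have h0 : (fun i : Fin n => if i ∈ (∅ : Finset (Fin n)) then w i else 0) = 0 := by
          funext i; simp
        rw [h0, add_zero, add_zero]
        simp
    | @insert i s hi ih =>
        set ws : Fin n → ℝ := fun j => if j ∈ s then w j else 0 with hws
        have hsplit : (fun j : Fin n => if j ∈ insert i s then w j else 0)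
            = ws + (w i) • (Pi.single i 1 : Fin n → ℝ) := by
          funext j
          by_cases hj : j = i
          · subst hj
            simp [hws, hi, Pi.single_apply]
          · simp [hws, Pi.single_apply, hj, Finset.mem_insert]
        have hws0 : 0 ≤ ws := by
          intro j
          by_cases hj : j ∈ s
          · simpa [hws, hj] using hw j
          · simp [hws, hj]
        have hstep := hDR (a + ws) (b + ws)
          (le_trans ha (by intro j; simpa using hws0 j))
          (by intro j; exact add_le_add (hab j) (le_refl _)) (w i) (hw i) i
        rw [hsplit]
        have e1 : a + (ws + w i • (Pi.single i 1 : Fin n → ℝ))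
            = (a + ws) + (w i) • (Pi.single i 1 : Fin n → ℝ) := by ring
        have e2 : b + (ws + w i • (Pi.single i 1 : Fin n → ℝ))
            = (b + ws) + (w i) • (Pi.single i 1 : Fin n → ℝ) := by ring
        rw [e1, e2]
        nlinarith [hstep, ih]
  have huniv := key Finset.univ
  have heq : (fun i : Fin n => if i ∈ (Finset.univ : Finset (Fin n)) then w i else 0) = w := by
    funext i; simp
  rwa [heq] at huniv

lemma chunk_rep {n : ℕ} (f : (Fin n → ℝ) → ℝ) (β : ℝ)
    (hDR : ∀ x y : Fin n → ℝ, 0 ≤ x → x ≤ y → ∀ k : ℝ, 0 ≤ k → ∀ i : Fin n,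
      f (x + k • (Pi.single i 1 : Fin n → ℝ)) - f x ≥ β * (f (y + k • (Pi.single i 1 : Fin n → ℝ)) - f y))
    (base : Fin n → ℝ) (hbase : 0 ≤ base) (δ : ℝ) (c : Fin n → ℝ)
    (hc : 0 ≤ c) (hcδ : f (base + c) - f base ≤ δ) :
    ∀ j : ℕ, ∀ s0 : Fin n → ℝ, 0 ≤ s0 → ∀ B : ℝ, β * (f (base + s0) - f base) ≤ B →
      0 ≤ s0 + (j : ℝ) • c ∧ β * (f (base + (s0 + (j : ℝ) • c)) - f base) ≤ B + j * δ := by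
  intro j
  induction j with
  | zero =>
      intro s0 hs0 B hB
      constructor
      · simpa using hs0
      · push_cast
        rw [zero_smul, add_zero]
        linarith
  | succ j ih =>
      intro s0 hs0 B hB
      obtain ⟨hsum0, hbound⟩ := ih s0 hs0 B hB
      have hkey := vecDR f β hDR base (base + (s0 + (j : ℝ) • c)) c hbase
        (by intro i; simpa using hsum0 i) hc
      have hcast : ((j + 1 : ℕ) : ℝ) • c = (j : ℝ) • c + c := by
        push_cast
        rw [add_smul, one_smul]
      constructor
      · rw [hcast]
        intro i
        have := hsum0 i
        have := hc i
        simp only [Pi.add_apply, Pi.zero_apply] at *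
        linarith
      · rw [hcast]
        have e1 : base + (s0 + ((j : ℝ) • c + c)) = (base + (s0 + (j : ℝ) • c)) + c := by ring
        rw [e1]
        push_cast
        nlinarith [hkey, hbound, hcδ]

lemma chunk_finset {n : ℕ} {V : Type*} [DecidableEq V] (f : (Fin n → ℝ) → ℝ) (β : ℝ)
    (hDR : ∀ x y : Fin n → ℝ, 0 ≤ x → x ≤ y → ∀ k : ℝ, 0 ≤ k → ∀ i : Fin n,
      f (x + k • (Pi.single i 1 : Fin n → ℝ)) - f x ≥ β * (f (y + k • (Pi.single i 1 : Fin n → ℝ)) - f y))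
    (base : Fin n → ℝ) (hbase : 0 ≤ base) (δ : ℝ)
    (s : Finset V) (k : V → ℕ) (g : V → Fin n → ℝ)
    (hg : ∀ v ∈ s, 0 ≤ g v ∧ f (base + g v) - f base ≤ δ) :
    0 ≤ ∑ v ∈ s, (k v : ℝ) • g v ∧
      β * (f (base + ∑ v ∈ s, (k v : ℝ) • g v) - f base) ≤ (∑ v ∈ s, k v : ℕ) * δ := by
  induction s using Finset.induction with
  | empty => simp
  | @insert v s hv ih =>
      obtain ⟨hS0, hSb⟩ := ih (fun u hu => hg u (Finset.mem_insert_of_mem hu))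
      obtain ⟨hgv0, hgvδ⟩ := hg v (Finset.mem_insert_self _ _)
      have := chunk_rep f β hDR base hbase δ (g v) hgv0 hgvδ (k v)
        (∑ u ∈ s, (k u : ℝ) • g u) hS0 ((∑ u ∈ s, k u : ℕ) * δ) hSb
      obtain ⟨h1, h2⟩ := this
      rw [Finset.sum_insert hv, Finset.sum_insert hv]
      constructor
      · intro i
        have := h1 i
        simpa [add_comm] using this
      · have e1 : (k v : ℝ) • g v + ∑ u ∈ s, (k u : ℝ) • g u
            = (∑ u ∈ s, (k u : ℝ) • g u) + (k v : ℝ) • g v := by ring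
        rw [e1]
        push_cast
        push_cast at h2
        linarith

/-- Theorem 1: guarantee of the LDGM greedy iteration. -/
theorem stmt_8 {n : ℕ} (E : Set (Fin n → ℝ)) (hfin : E.Finite) (hne : E.Nonempty)
    (hpos : ∀ v ∈ E, 0 ≤ v)
    (l : ℕ) (hl : 0 < l)
    (m : ℕ) (hm : m = (maxFrontier E).ncard)
    (β : ℝ) (hβ0 : 0 < β) (hβ1 : β ≤ 1)
    (f : (Fin n → ℝ) → ℝ) (hf0 : f 0 = 0)
    (hmono : ∀ x y : Fin n → ℝ, 0 ≤ x → x ≤ y → f x ≤ f y)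
    (hDR : ∀ x y : Fin n → ℝ, 0 ≤ x → x ≤ y → ∀ k : ℝ, 0 ≤ k → ∀ i : Fin n,
      f (x + k • (Pi.single i 1 : Fin n → ℝ)) - f x ≥ β * (f (y + k • (Pi.single i 1 : Fin n → ℝ)) - f y))
    (L : ℝ) (hL : 0 ≤ L)
    (hLip : ∀ x ∈ maxFrontier (convexHull ℝ E), ∀ y ∈ maxFrontier (convexHull ℝ E),
      |f x - f y| ≤ L * euclidNorm (x - y))
    (D : ℝ) (hD : 0 ≤ D) (hDb : ∀ x ∈ convexHull ℝ E, euclidNorm x ≤ D)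
    (xstar : Fin n → ℝ) (hxs : xstar ∈ maxFrontier (convexHull ℝ E))
    (hopt : ∀ y ∈ convexHull ℝ E, f y ≤ f xstar)
    (x : ℕ → Fin n → ℝ) (hx0 : x 0 = 0)
    (e : ℕ → Fin n → ℝ)
    (hstep : ∀ t < l,
      e t ∈ (fun v : Fin n → ℝ => (l : ℝ)⁻¹ • v) '' maxFrontier E ∧
      (∀ e' ∈ (fun v : Fin n → ℝ => (l : ℝ)⁻¹ • v) '' maxFrontier E,
        f (x t + e') ≤ f (x t + e t)) ∧
      x (t + 1) = x t + e t) :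
    f (x l) ≥ (1 - Real.exp (-β)) * f xstar
      - (1 - Real.exp (-β)) * m * D * L / l := by
  classical
  have hlR : (0 : ℝ) < l := by exact_mod_cast hl
  have hl1 : (1 : ℝ) ≤ l := by exact_mod_cast hl
  -- representation of xstar with positive weights
  have hxconv : xstar ∈ convexHull ℝ (↑hfin.toFinset : Set (Fin n → ℝ)) := by
    rw [hfin.coe_toFinset]; exact hxs.1
  obtain ⟨w, hw0, hw1, hwsum⟩ := Finset.mem_convexHull'.mp hxconv
  set T : Finset (Fin n → ℝ) := hfin.toFinset.filter (fun v => w v ≠ 0) with hTdef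
  have hTE : (↑T : Set (Fin n → ℝ)) ⊆ E := by
    intro v hv
    have := Finset.mem_of_mem_filter v hv
    rwa [hfin.mem_toFinset] at this
  have hTpos : ∀ v ∈ T, 0 < w v := by
    intro v hv
    have h1 := hw0 v (Finset.mem_of_mem_filter v hv)
    have h2 := (Finset.mem_filter.mp hv).2
    exact lt_of_le_of_ne h1 (Ne.symm h2)
  have hTsum1 : ∑ v ∈ T, w v = 1 := by
    rw [← hw1, hTdef]
    exact Finset.sum_filter_ne_zero _
  have hTrep : ∑ v ∈ T, w v • v = xstar := by
    rw [← hwsum]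
    apply Finset.sum_subset (Finset.filter_subset _ _)
    intro v hvF hnv
    have hwv : w v = 0 := by
      by_contra h
      exact hnv (Finset.mem_filter.mpr ⟨hvF, h⟩)
    rw [hwv, zero_smul]
  have hTne : T.Nonempty := by
    rcases T.eq_empty_or_nonempty with h | h
    · rw [h, Finset.sum_empty] at hTsum1; norm_num at hTsum1
    · exact h
  -- the key maximality claim
  have hclaim : ∀ ν : (Fin n → ℝ) → ℝ, (∀ v ∈ T, 0 ≤ ν v) → ∑ v ∈ T, ν v = 1 →
      (∑ v ∈ T, ν v • v) ∈ maxFrontier (convexHull ℝ E) := by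
    intro ν hν0 hν1
    set z : Fin n → ℝ := ∑ v ∈ T, ν v • v with hzdef
    have hzconv : z ∈ convexHull ℝ E :=
      (convex_convexHull ℝ E).sum_mem hν0 hν1
        (fun v hv => subset_convexHull ℝ E (hTE hv))
    refine ⟨hzconv, ?_⟩
    rintro ⟨p, hp, hzp, hzne⟩
    set ε : ℝ := T.inf' hTne w with hεdef
    have hεpos : 0 < ε := (Finset.lt_inf'_iff hTne).mpr hTpos
    have hεle : ∀ v ∈ T, ε ≤ w v := fun v hv => Finset.inf'_le w hv
    have hε1 : ε ≤ 1 := by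
      obtain ⟨v, hv⟩ := hTne
      calc ε ≤ w v := hεle v hv
        _ ≤ ∑ u ∈ T, w u := Finset.single_le_sum (fun u hu => (hTpos u hu).le) hv
        _ = 1 := hTsum1
    have hνle1 : ∀ v ∈ T, ν v ≤ 1 := by
      intro v hv
      calc ν v ≤ ∑ u ∈ T, ν u := Finset.single_le_sum hν0 hv
        _ = 1 := hν1
    have hc0 : ∀ v ∈ T, 0 ≤ w v - ε * ν v := by
      intro v hv
      have h1 : ε * ν v ≤ ε * 1 := by
        apply mul_le_mul_of_nonneg_left (hνle1 v hv) hεpos.le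
      have := hεle v hv
      nlinarith
    have hcsum : ∑ v ∈ T, (w v - ε * ν v) = 1 - ε := by
      rw [Finset.sum_sub_distrib, hTsum1, ← Finset.mul_sum, hν1, mul_one]
    have hcrep : ∑ v ∈ T, (w v - ε * ν v) • v = xstar - ε • z := by
      simp only [sub_smul, Finset.sum_sub_distrib, hTrep, mul_smul]
      rw [← Finset.smul_sum, ← hzdef]
    set q : Fin n → ℝ := xstar + ε • (p - z) with hqdef
    have hqconv : q ∈ convexHull ℝ E := by
      rcases eq_or_lt_of_le hε1 with heq | hlt
      · -- ε = 1 : all coefficients vanish, xstar = z, q = p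
        have hall : ∀ v ∈ T, w v - ε * ν v = 0 := by
          intro v hv
          have := (Finset.sum_eq_zero_iff_of_nonneg hc0).mp (by rw [hcsum, ← heq]; ring)
          exact this v hv
        have hxz : xstar - ε • z = 0 := by
          rw [← hcrep]
          exact Finset.sum_eq_zero (fun v hv => by rw [hall v hv, zero_smul])
        have hqp : q = p := by
          funext i
          have h1 := congrFun hxz i
          simp only [Pi.sub_apply, Pi.smul_apply, Pi.zero_apply, smul_eq_mul] at h1
          simp only [hqdef, Pi.add_apply, Pi.smul_apply, Pi.sub_apply, smul_eq_mul]
          rw [heq] at h1 ⊢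
          linarith
        rw [hqp]; exact hp
      · -- ε < 1
        have h1ε : (0:ℝ) < 1 - ε := by linarith
        set r : Fin n → ℝ := ∑ v ∈ T, ((w v - ε * ν v) / (1 - ε)) • v with hrdef
        have hrconv : r ∈ convexHull ℝ E := by
          apply (convex_convexHull ℝ E).sum_mem
          · exact fun v hv => div_nonneg (hc0 v hv) h1ε.le
          · rw [← Finset.sum_div, hcsum, div_self h1ε.ne']
          · exact fun v hv => subset_convexHull ℝ E (hTE hv)
        have hq : q = (1 - ε) • r + ε • p := by
          have : (1 - ε) • r = xstar - ε • z := by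
            rw [hrdef, Finset.smul_sum, ← hcrep]
            apply Finset.sum_congr rfl
            intro v hv
            rw [smul_smul, mul_div_cancel₀ _ h1ε.ne']
          rw [this, hqdef, smul_sub]
          funext i
          simp only [Pi.add_apply, Pi.sub_apply, Pi.smul_apply, smul_eq_mul]
          ring
        rw [hq]
        exact (convex_convexHull ℝ E) hrconv hp h1ε.le hεpos.le (by ring)
    have hle : xstar ≤ q := by
      intro i
      have := hzp i
      simp only [hqdef, Pi.add_apply, Pi.smul_apply, Pi.sub_apply, smul_eq_mul]
      nlinarith
    have hneq : xstar ≠ q := by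
      intro h
      apply hzne
      have h0 : ε • (p - z) = 0 := by
        funext i
        have := congrFun h i
        simp only [hqdef, Pi.add_apply, Pi.smul_apply, Pi.sub_apply, Pi.zero_apply,
          smul_eq_mul] at this ⊢
        linarith
      have := smul_eq_zero.mp h0
      rcases this with h | h
      · exact absurd h hεpos.ne'
      · funext i
        have := congrFun h i
        simp only [Pi.sub_apply, Pi.zero_apply] at this
        linarith
    exact hxs.2 ⟨q, hqconv, hle, hneq⟩
  -- every element of T is in maxFrontier E
  have hTF : ∀ v ∈ T, v ∈ maxFrontier E := by
    intro v hv
    have hrep : ∑ u ∈ T, (if u = v then (1:ℝ) else 0) • u = v := by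
      have hsm : ∀ u ∈ T, (if u = v then (1:ℝ) else 0) • u = (if u = v then u else 0) := by
        intro u _; split <;> simp
      rw [Finset.sum_congr rfl hsm, Finset.sum_ite_eq' T v (fun u => u), if_pos hv]
    have hmax := hclaim (fun u => if u = v then (1:ℝ) else 0)
      (fun u _ => by by_cases h : u = v <;> simp [h])
      (by rw [Finset.sum_ite_eq' T v (fun _ => (1:ℝ)), if_pos hv])
    rw [hrep] at hmax
    refine ⟨hTE hv, ?_⟩
    rintro ⟨y, hyE, hyle, hyne⟩
    exact hmax.2 ⟨y, subset_convexHull ℝ E hyE, hyle, hyne⟩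
  have hcardm : (T.card : ℝ) ≤ m := by
    have h1 : (↑T : Set (Fin n → ℝ)).ncard ≤ (maxFrontier E).ncard := by
      apply Set.ncard_le_ncard
      · intro v hv; exact hTF v hv
      · exact hfin.subset (fun u hu => hu.1)
    rw [Set.ncard_coe_finset] at h1
    rw [hm]
    exact_mod_cast h1
  -- rounding
  have hfc : ∀ v ∈ T, ⌊(l : ℝ) * w v⌋₊ ≤ ⌈(l : ℝ) * w v⌉₊ := fun v _ => Nat.floor_le_ceil _
  have hwpos : ∀ v ∈ T, (0:ℝ) ≤ (l : ℝ) * w v := fun v hv => mul_nonneg hlR.le (hTpos v hv).le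
  obtain ⟨k, hksum, hkb⟩ := round_exists_s8 T (fun v => ⌊(l : ℝ) * w v⌋₊)
      (fun v => ⌈(l : ℝ) * w v⌉₊) hfc l
      (by
        have : ((∑ v ∈ T, ⌊(l : ℝ) * w v⌋₊ : ℕ) : ℝ) ≤ (l : ℝ) := by
          push_cast
          calc ∑ v ∈ T, (⌊(l : ℝ) * w v⌋₊ : ℝ) ≤ ∑ v ∈ T, (l : ℝ) * w v :=
                Finset.sum_le_sum (fun v hv => Nat.floor_le (hwpos v hv))
            _ = (l : ℝ) := by rw [← Finset.mul_sum, hTsum1, mul_one]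
        exact_mod_cast this)
      (by
        have : (l : ℝ) ≤ ((∑ v ∈ T, ⌈(l : ℝ) * w v⌉₊ : ℕ) : ℝ) := by
          push_cast
          calc (l : ℝ) = ∑ v ∈ T, (l : ℝ) * w v := by rw [← Finset.mul_sum, hTsum1, mul_one]
            _ ≤ ∑ v ∈ T, (⌈(l : ℝ) * w v⌉₊ : ℝ) :=
                Finset.sum_le_sum (fun v hv => Nat.le_ceil _)
        exact_mod_cast this)
  -- the surrogate point z
  set z : Fin n → ℝ := ∑ v ∈ T, ((k v : ℝ) / l) • v with hzdef2
  have hzmax : z ∈ maxFrontier (convexHull ℝ E) := by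
    apply hclaim
    · intro v _; positivity
    · rw [← Finset.sum_div]
      rw [show ∑ v ∈ T, (k v : ℝ) = ((∑ v ∈ T, k v : ℕ) : ℝ) by push_cast; rfl]
      rw [hksum, div_self hlR.ne']
  have hkclose : ∀ v ∈ T, |(k v : ℝ) / l - w v| ≤ 1 / l := by
    intro v hv
    obtain ⟨hfl, hcl⟩ := hkb v hv
    have h1 : (k v : ℝ) ≤ (l : ℝ) * w v + 1 := by
      calc (k v : ℝ) ≤ (⌈(l : ℝ) * w v⌉₊ : ℝ) := by exact_mod_cast hcl
        _ ≤ (l : ℝ) * w v + 1 := (Nat.ceil_lt_add_one (hwpos v hv)).le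
    have h2 : (l : ℝ) * w v - 1 ≤ (k v : ℝ) := by
      have := Nat.lt_floor_add_one ((l : ℝ) * w v)
      have hk : (⌊(l : ℝ) * w v⌋₊ : ℝ) ≤ (k v : ℝ) := by exact_mod_cast hfl
      linarith
    have e : (k v : ℝ) / l - w v = ((k v : ℝ) - (l : ℝ) * w v) / l := by
      field_simp
    rw [e, abs_div, abs_of_pos hlR]
    gcongr
    rw [abs_le]
    constructor <;> linarith
  -- distance bound
  have hdist : euclidNorm (xstar - z) ≤ m * D / l := by
    have hsub : xstar - z = ∑ v ∈ T, (w v - (k v : ℝ) / l) • v := by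
      simp only [sub_smul, Finset.sum_sub_distrib, hTrep, hzdef2]
    rw [hsub]
    calc euclidNorm (∑ v ∈ T, (w v - (k v : ℝ) / l) • v)
        ≤ ∑ v ∈ T, euclidNorm ((w v - (k v : ℝ) / l) • v) := euclidNorm_sum_le _ _
      _ = ∑ v ∈ T, |w v - (k v : ℝ) / l| * euclidNorm v := by
          exact Finset.sum_congr rfl (fun v _ => euclidNorm_smul' _ _)
      _ ≤ ∑ v ∈ T, (1 / l) * D := by
          apply Finset.sum_le_sum
          intro v hv
          have h1 : |w v - (k v : ℝ) / l| ≤ 1 / l := by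
            rw [abs_sub_comm]; exact hkclose v hv
          have h2 : euclidNorm v ≤ D := hDb v (subset_convexHull ℝ E (hTE hv))
          have h3 : (0:ℝ) ≤ euclidNorm v := by
            rw [euclidNorm]; positivity
          calc |w v - (k v : ℝ) / l| * euclidNorm v ≤ (1/l) * euclidNorm v := by
                apply mul_le_mul_of_nonneg_right h1 h3
            _ ≤ (1/l) * D := by
                apply mul_le_mul_of_nonneg_left h2 (by positivity)
      _ = T.card * ((1 / (l:ℝ)) * D) := by
          rw [Finset.sum_const, nsmul_eq_mul]
      _ = (T.card : ℝ) * D / l := by ring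
      _ ≤ m * D / l := by gcongr
  -- Lipschitz : value of z close to optimum
  have hfz : f xstar - m * D * L / l ≤ f z := by
    have h1 := hLip xstar hxs z hzmax
    have h2 : |f xstar - f z| ≤ L * (m * D / l) := by
      refine le_trans h1 (mul_le_mul_of_nonneg_left hdist hL)
    have h3 : f xstar - f z ≤ L * (m * D / l) := le_trans (le_abs_self _) h2
    have : L * (m * D / l) = m * D * L / l := by ring
    linarith [this ▸ h3]
  -- nonnegativity of iterates and of z
  have hz0 : 0 ≤ z := by
    intro i
    rw [hzdef2]
    simp only [Finset.sum_apply, Pi.smul_apply, smul_eq_mul, Pi.zero_apply]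
    apply Finset.sum_nonneg
    intro v hv
    have hvpos := hpos v (hTE hv) i
    exact mul_nonneg (by positivity) hvpos
  have hxt0 : ∀ t, t ≤ l → 0 ≤ x t := by
    intro t
    induction t with
    | zero => intro _; rw [hx0]
    | succ t ih =>
        intro htl
        have ht : t < l := htl
        obtain ⟨⟨u, hu, huev⟩, _, hxe⟩ := hstep t ht
        rw [hxe]
        intro i
        have h1 := ih (le_of_lt ht) i
        have h2 : 0 ≤ e t i := by
          rw [← huev]
          simp only [Pi.smul_apply, smul_eq_mul]
          have h3 := hpos u hu.1 i
          exact mul_nonneg (by positivity) h3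
        simp only [Pi.add_apply, Pi.zero_apply] at *
        linarith
  have hzalt : z = ∑ v ∈ T, (k v : ℝ) • ((l:ℝ)⁻¹ • v) := by
    rw [hzdef2]
    apply Finset.sum_congr rfl
    intro v _
    rw [smul_smul, div_eq_mul_inv]
  -- per-step recurrence
  have hrec : ∀ t, t < l → β / l * (f z - f (x t)) ≤ f (x (t+1)) - f (x t) := by
    intro t ht
    obtain ⟨het, hopt', hxe⟩ := hstep t ht
    have hxt := hxt0 t (le_of_lt ht)
    have hchunks := chunk_finset f β hDR (x t) hxt (f (x (t+1)) - f (x t)) T k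
      (fun v => (l:ℝ)⁻¹ • v)
      (by
        intro v hv
        constructor
        · intro i
          simp only [Pi.smul_apply, smul_eq_mul, Pi.zero_apply]
          have h3 := hpos v (hTE hv) i
          exact mul_nonneg (by positivity) h3
        · have hmem : (l:ℝ)⁻¹ • v ∈ (fun u : Fin n → ℝ => (l : ℝ)⁻¹ • u) '' maxFrontier E :=
            ⟨v, hTF v hv, rfl⟩
          have h4 := hopt' _ hmem
          rw [hxe]
          linarith)
    obtain ⟨hZ0, hZb⟩ := hchunks
    rw [← hzalt] at hZ0 hZb
    rw [hksum] at hZb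
    have hmle : f z ≤ f (x t + z) := by
      apply hmono z (x t + z) hz0
      intro i
      have h5 := hxt i
      simp only [Pi.add_apply, Pi.zero_apply] at h5 ⊢
      linarith
    have h1 : β * (f z - f (x t)) ≤ β * (f (x t + z) - f (x t)) :=
      mul_le_mul_of_nonneg_left (by linarith) hβ0.le
    have h2 : β * (f z - f (x t)) ≤ (l:ℝ) * (f (x (t+1)) - f (x t)) := le_trans h1 hZb
    rw [div_mul_eq_mul_div, div_le_iff₀ hlR]
    linarith
  have hstep1 : (0:ℝ) ≤ 1 - β / l := by
    have : β / l ≤ β := div_le_self hβ0.le hl1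
    linarith
  have hfz0 : 0 ≤ f z := by
    have := hmono 0 z (le_refl 0) hz0
    rwa [hf0] at this
  have hmain : ∀ t, t ≤ l → f z - f (x t) ≤ (1 - β / l)^t * f z := by
    intro t
    induction t with
    | zero => intro _; rw [hx0, hf0, pow_zero, one_mul]; linarith
    | succ t ih =>
        intro htl
        have ht : t < l := htl
        have ihh := ih (le_of_lt ht)
        have hr := hrec t ht
        calc f z - f (x (t+1)) ≤ (1 - β/l) * (f z - f (x t)) := by
              have ee : (1 - β/(l:ℝ)) * (f z - f (x t))
                  = (f z - f (x t)) - β/(l:ℝ) * (f z - f (x t)) := by ring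
              rw [ee]
              linarith
          _ ≤ (1 - β/l) * ((1 - β/l)^t * f z) := mul_le_mul_of_nonneg_left ihh hstep1
          _ = (1 - β/l)^(t+1) * f z := by ring
  have hfinl := hmain l (le_refl l)
  have hexp : (1 - β/(l:ℝ))^l ≤ Real.exp (-β) := by
    have h1 : 1 - β/(l:ℝ) ≤ Real.exp (-(β/l)) := by
      have := Real.add_one_le_exp (-(β/l))
      linarith
    have h2 := pow_le_pow_left₀ hstep1 h1 l
    refine le_trans h2 ?_
    rw [← Real.exp_nat_mul]
    apply le_of_eq
    congr 1
    field_simp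
  have hexp1 : Real.exp (-β) ≤ 1 := by
    rw [Real.exp_le_one_iff]
    linarith
  have hfl : (1 - Real.exp (-β)) * f z ≤ f (x l) := by
    have h3 : (1 - β/(l:ℝ))^l * f z ≤ Real.exp (-β) * f z :=
      mul_le_mul_of_nonneg_right hexp hfz0
    nlinarith [hfinl]
  have hfinal : (1 - Real.exp (-β)) * (f xstar - m * D * L / l)
      ≤ (1 - Real.exp (-β)) * f z :=
    mul_le_mul_of_nonneg_left hfz (by linarith)
  have hring : (1 - Real.exp (-β)) * (f xstar - m*D*L/l)
      = (1 - Real.exp (-β)) * f xstar - (1 - Real.exp (-β)) * m * D * L / l := by ring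
  linarith
end

section
/- (Lemma on the generalized-greedy step of LDGM-G) Let f : ℝ^n → ℝ be monotone on the nonnegative orthant with submodularity ratio at least α, where 0 < α ≤ 1. Let e_1, …, e_m ∈ ℝ^n be nonzero nonnegative vectors that are pairwise orthogonal, let l be a positive integer, and let c_1, …, c_m and d_1, …, d_m be natural numbers with d_1 + ⋯ + d_m = l. Set x = Σ_i c_i·e_i and v* = Σ_i d_i·e_i. Suppose i₀ ∈ {1, …, m} and k is an integer with 1 ≤ k ≤ l − c_{i₀} such that for every i ∈ {1, …, m} and every integer j with 1 ≤ j ≤ l − c_i one has (f(x + k·e_{i₀}) − f(x))/k ≥ (f(x + j·e_i) − f(x))/j. Then (f(x + k·e_{i₀}) − f(x))/k ≥ (α/l)·(f(v*) − f(x)). -/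
/-- Aggregated weak-submodularity along a nonnegative direction `w` whose
support is a set of coordinates on which `x` and `y` agree. -/
lemma lemA_stmt9 {n : ℕ} (f : (Fin n → ℝ) → ℝ) (α : ℝ)
    (hsub : ∀ x y : Fin n → ℝ, 0 ≤ x → x ≤ y → ∀ i : Fin n, x i = y i →
      ∀ k : ℝ, 0 ≤ k →
      f (x + k • (Pi.single i 1 : Fin n → ℝ)) - f x ≥ α * (f (y + k • (Pi.single i 1 : Fin n → ℝ)) - f y))
    (x y w : Fin n → ℝ) (hx0 : 0 ≤ x) (hxy : x ≤ y) (hw : 0 ≤ w)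
    (hagree : ∀ s, w s ≠ 0 → x s = y s)
    (t : ℝ) (ht : 0 ≤ t) :
    f (x + t • w) - f x ≥ α * (f (y + t • w) - f y) := by
  have hsingle_nonneg : ∀ (s' : Fin n) (u : Fin n),
      (0:ℝ) ≤ (Pi.single s' (t * w s') : Fin n → ℝ) u := by
    intro s' u
    rcases eq_or_ne u s' with h | h
    · subst h; simp [mul_nonneg ht (hw u)]
    · simp [Pi.single_eq_of_ne h]
  have key : ∀ S : Finset (Fin n),
      f (x + ∑ s ∈ S, Pi.single s (t * w s)) - f x ≥
      α * (f (y + ∑ s ∈ S, Pi.single s (t * w s)) - f y) := by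
    intro S
    induction S using Finset.induction_on with
    | empty => simp
    | @insert s S hs ih =>
      by_cases hws : w s = 0
      · simpa [Finset.sum_insert hs, hws] using ih
      · set g : Fin n → ℝ := ∑ s' ∈ S, Pi.single s' (t * w s') with hg
        have hg0 : ∀ u, (0:ℝ) ≤ g u := by
          intro u
          have : g u = ∑ s' ∈ S, (Pi.single s' (t * w s') : Fin n → ℝ) u := by
            simp [hg]
          rw [this]
          exact Finset.sum_nonneg (fun s' _ => hsingle_nonneg s' u)
        have hx'0 : (0:Fin n → ℝ) ≤ x + g := fun u => by
          have h1 := hg0 u; have h2 := hx0 u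
          simp only [Pi.add_apply, Pi.zero_apply] at *; linarith
        have hx'y' : x + g ≤ y + g := fun u => by
          have := hxy u; simp only [Pi.add_apply]; linarith
        have hagr : (x + g) s = (y + g) s := by
          simp only [Pi.add_apply]
          rw [hagree s hws]
        have hstep := hsub (x + g) (y + g) hx'0 hx'y' s hagr (t * w s)
          (mul_nonneg ht (hw s))
        have hsingle : (t * w s) • (Pi.single s 1 : Fin n → ℝ)
            = Pi.single s (t * w s) := by
          funext u
          rcases eq_or_ne u s with h | h
          · subst h; simp
          · simp [Pi.single_eq_of_ne h]
        have hrw : ∀ z : Fin n → ℝ,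
            z + ∑ s' ∈ insert s S, Pi.single s' (t * w s')
              = (z + g) + (t * w s) • (Pi.single s 1 : Fin n → ℝ) := by
          intro z
          rw [Finset.sum_insert hs, hsingle, ← hg]
          abel
        rw [hrw x, hrw y]
        have ihx : f (x + g) - f x ≥ α * (f (y + g) - f y) := ih
        linarith
  have hw' : (∑ s : Fin n, Pi.single s (t * w s)) = t • w := by
    have h := Finset.univ_sum_single (t • w)
    simpa [Pi.smul_apply, smul_eq_mul] using h
  have := key Finset.univ
  rwa [hw'] at this

/-- Lemma on the generalized-greedy step of LDGM-G for (weakly) submodular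
functions over pairwise-orthogonal directions. -/
theorem stmt_9 {n m : ℕ} (f : (Fin n → ℝ) → ℝ) (α : ℝ) (hα0 : 0 < α) (hα1 : α ≤ 1)
    (hmono : ∀ x y : Fin n → ℝ, 0 ≤ x → x ≤ y → f x ≤ f y)
    (hsub : ∀ x y : Fin n → ℝ, 0 ≤ x → x ≤ y → ∀ i : Fin n, x i = y i →
      ∀ k : ℝ, 0 ≤ k →
      f (x + k • (Pi.single i 1 : Fin n → ℝ)) - f x ≥ α * (f (y + k • (Pi.single i 1 : Fin n → ℝ)) - f y))
    (e : Fin m → Fin n → ℝ) (hnz : ∀ i, e i ≠ 0) (hpos : ∀ i, 0 ≤ e i)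
    (horth : ∀ i j, i ≠ j → (∑ t, e i t * e j t) = 0)
    (l : ℕ) (hl : 0 < l)
    (c d : Fin m → ℕ) (hd : ∑ i, d i = l)
    (x v : Fin n → ℝ)
    (hx : x = ∑ i, (c i : ℝ) • e i) (hv : v = ∑ i, (d i : ℝ) • e i)
    (i0 : Fin m) (k : ℕ) (hk1 : 1 ≤ k) (hk2 : k + c i0 ≤ l)
    (hbest : ∀ i : Fin m, ∀ j : ℕ, 1 ≤ j → j + c i ≤ l →
      (f (x + (k : ℝ) • e i0) - f x) / k ≥ (f (x + (j : ℝ) • e i) - f x) / j) :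
    (f (x + (k : ℝ) • e i0) - f x) / k ≥ (α / l) * (f v - f x) := by
  -- disjoint supports
  have hdisj : ∀ i i' : Fin m, i ≠ i' → ∀ s, e i s ≠ 0 → e i' s = 0 := by
    intro i i' hne s hs
    have h0 := horth i i' hne
    have hterm : e i s * e i' s = 0 := by
      have := (Finset.sum_eq_zero_iff_of_nonneg
        (fun t _ => mul_nonneg (hpos i t) (hpos i' t))).mp h0 s (Finset.mem_univ s)
      exact this
    exact (mul_eq_zero.mp hterm).resolve_left hs
  set G : ℝ := (f (x + (k : ℝ) • e i0) - f x) / k with hG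
  have hx0 : (0:Fin n → ℝ) ≤ x := by
    rw [hx]
    intro u
    simp only [Finset.sum_apply, Pi.smul_apply, smul_eq_mul]
    exact Finset.sum_nonneg fun i _ =>
      mul_nonneg (Nat.cast_nonneg _) (hpos i u)
  have hkpos : (0:ℝ) < k := by exact_mod_cast hk1
  have hG0 : 0 ≤ G := by
    have hle : x ≤ x + (k : ℝ) • e i0 := fun u => by
      have : 0 ≤ (k:ℝ) * e i0 u := mul_nonneg (le_of_lt hkpos) (hpos i0 u)
      simp only [Pi.add_apply, Pi.smul_apply, smul_eq_mul]; linarith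
    have := hmono x (x + (k : ℝ) • e i0) hx0 hle
    exact div_nonneg (by linarith) (le_of_lt hkpos)
  -- increments
  set j : Fin m → ℕ := fun i => max (d i) (c i) - c i with hj
  have hcj : ∀ i, c i + j i = max (d i) (c i) := fun i =>
    Nat.add_sub_cancel' (le_max_right _ _)
  -- claim 1 : telescoping with submodularity
  have claim1 : ∀ S : Finset (Fin m),
      α * (f (x + ∑ i ∈ S, (j i : ℝ) • e i) - f x) ≤
      ∑ i ∈ S, (f (x + (j i : ℝ) • e i) - f x) := by
    intro S
    induction S using Finset.induction_on with
    | empty => simp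
    | @insert i S hiS ih =>
      set g : Fin n → ℝ := ∑ i' ∈ S, (j i' : ℝ) • e i' with hg
      have hg0 : ∀ u, (0:ℝ) ≤ g u := by
        intro u
        have hgu : g u = ∑ i' ∈ S, (j i' : ℝ) * e i' u := by
          simp [hg]
        rw [hgu]
        exact Finset.sum_nonneg fun i' _ =>
          mul_nonneg (Nat.cast_nonneg _) (hpos i' u)
      have hxle : x ≤ x + g := fun u => by
        have := hg0 u; simp only [Pi.add_apply]; linarith
      have hagr : ∀ s, e i s ≠ 0 → x s = (x + g) s := by
        intro s hs
        have : g s = 0 := by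
          simp only [hg, Finset.sum_apply, Pi.smul_apply, smul_eq_mul]
          apply Finset.sum_eq_zero
          intro i' hi'
          have hne : i ≠ i' := by rintro rfl; exact hiS hi'
          rw [hdisj i i' hne s hs, mul_zero]
        simp [this]
      have hAi := lemA_stmt9 f α hsub x (x + g) (e i) hx0 hxle (hpos i)
        hagr (j i : ℝ) (Nat.cast_nonneg _)
      have hrw : x + ∑ i' ∈ insert i S, (j i' : ℝ) • e i'
          = (x + g) + (j i : ℝ) • e i := by
        rw [Finset.sum_insert hiS, ← hg]; abel
      rw [hrw, Finset.sum_insert hiS]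
      have ih' := ih
      linarith
  -- claim 2 : v ≤ x + ∑ j i • e i
  have claim2 : v ≤ x + ∑ i, (j i : ℝ) • e i := by
    intro u
    rw [hv, hx]
    simp only [Pi.add_apply, Finset.sum_apply, Pi.smul_apply, smul_eq_mul]
    rw [← Finset.sum_add_distrib]
    apply Finset.sum_le_sum
    intro i _
    have hd' : (d i : ℝ) ≤ (c i : ℝ) + (j i : ℝ) := by
      have : (d i : ℕ) ≤ c i + j i := by rw [hcj i]; exact le_max_left _ _
      exact_mod_cast this
    calc (d i : ℝ) * e i u ≤ ((c i : ℝ) + (j i : ℝ)) * e i u :=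
          mul_le_mul_of_nonneg_right hd' (hpos i u)
      _ = (c i : ℝ) * e i u + (j i : ℝ) * e i u := by ring
  have hv0 : (0:Fin n → ℝ) ≤ v := by
    rw [hv]
    intro u
    simp only [Finset.sum_apply, Pi.smul_apply, smul_eq_mul]
    exact Finset.sum_nonneg fun i _ =>
      mul_nonneg (Nat.cast_nonneg _) (hpos i u)
  -- claim 3 : per-direction bound via hbest
  have claim3 : ∀ i : Fin m, f (x + (j i : ℝ) • e i) - f x ≤ (j i : ℝ) * G := by
    intro i
    rcases Nat.eq_zero_or_pos (j i) with h0 | h1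
    · simp [h0]
    · have hji_le : j i + c i ≤ l := by
        have hmax : max (d i) (c i) = d i := by
          rcases max_cases (d i) (c i) with ⟨hm, _⟩ | ⟨hm, hlt⟩
          · exact hm
          · exfalso
            have : j i = 0 := by
              simp only [hj]
              omega
            omega
        have hdl : d i ≤ l := by
          rw [← hd]
          exact Finset.single_le_sum (fun i _ => Nat.zero_le _) (Finset.mem_univ i)
        have hji : c i + j i = d i ⊔ c i := hcj i
        omega
      have := hbest i (j i) h1 hji_le
      have hjpos : (0:ℝ) < (j i : ℝ) := by exact_mod_cast h1
      rw [ge_iff_le, div_le_iff₀ hjpos] at this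
      calc f (x + (j i : ℝ) • e i) - f x ≤ G * (j i : ℝ) := this
        _ = (j i : ℝ) * G := mul_comm _ _
  -- claim 4 : ∑ j ≤ l
  have claim4 : (∑ i, j i) ≤ l := by
    rw [← hd]
    apply Finset.sum_le_sum
    intro i _
    simp only [hj]
    omega
  -- assemble
  have hchain : α * (f v - f x) ≤ (l : ℝ) * G := by
    have h1 : f v ≤ f (x + ∑ i, (j i : ℝ) • e i) :=
      hmono v _ hv0 claim2
    have h2 : α * (f v - f x) ≤
        α * (f (x + ∑ i, (j i : ℝ) • e i) - f x) := by
      apply mul_le_mul_of_nonneg_left _ (le_of_lt hα0)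
      linarith
    have h3 := claim1 Finset.univ
    have h4 : (∑ i, (f (x + (j i : ℝ) • e i) - f x)) ≤ (∑ i, (j i : ℝ) * G) :=
      Finset.sum_le_sum fun i _ => claim3 i
    have h5 : (∑ i, (j i : ℝ) * G) = ((∑ i, j i : ℕ) : ℝ) * G := by
      rw [← Finset.sum_mul]
      push_cast
      ring
    have h6 : ((∑ i, j i : ℕ) : ℝ) * G ≤ (l : ℝ) * G := by
      apply mul_le_mul_of_nonneg_right _ hG0
      exact_mod_cast claim4
    calc α * (f v - f x) ≤ α * (f (x + ∑ i, (j i : ℝ) • e i) - f x) := h2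
      _ ≤ ∑ i, (f (x + (j i : ℝ) • e i) - f x) := h3
      _ ≤ ∑ i, (j i : ℝ) * G := h4
      _ = ((∑ i, j i : ℕ) : ℝ) * G := h5
      _ ≤ (l : ℝ) * G := h6
  have hlpos : (0:ℝ) < (l : ℝ) := by exact_mod_cast hl
  rw [ge_iff_le]
  show (α / l) * (f v - f x) ≤ G
  calc (α / l) * (f v - f x) = (α * (f v - f x)) / l := by ring
    _ ≤ ((l : ℝ) * G) / l := (div_le_div_iff_of_pos_right hlpos).mpr hchain
    _ = G := by field_simp
end

section
/- (Induction step in the proof of Theorem 2) Let l be a positive integer, 0 < α ≤ 1, and V ≥ 0. Let (k_s)_{s≥1} be positive integers with k_s ≤ l for all s, and let (b_s)_{s≥0} be a sequence of reals with b_0 ≥ 0 such that for all s ≥ 0, b_{s+1} ≥ (α·k_{s+1}/l)·V + (1 − α·k_{s+1}/l)·b_s. Then for every s ≥ 1, b_s ≥ (1 − (1 − α·(k_1 + ⋯ + k_s)/(s·l))^s)·V. -/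
open Finset

/-- Unweighted AM-GM: the product of `n` nonnegative reals is at most the `n`-th power
of their arithmetic mean. -/
lemma prod_le_avg_pow {ι : Type*} (s : Finset ι) (z : ι → ℝ) (hz : ∀ i ∈ s, 0 ≤ z i)
    (hn : 0 < s.card) :
    ∏ i ∈ s, z i ≤ ((∑ i ∈ s, z i) / s.card) ^ s.card := by
  set n : ℕ := s.card with hncard
  have hnR : (0 : ℝ) < (n : ℝ) := by exact_mod_cast hn
  have hw : ∀ i ∈ s, (0 : ℝ) ≤ (n : ℝ)⁻¹ := fun _ _ => by positivity
  have hw' : ∑ _i ∈ s, (n : ℝ)⁻¹ = 1 := by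
    rw [Finset.sum_const, ← hncard, nsmul_eq_mul, mul_inv_cancel₀ hnR.ne']
  have h := Real.geom_mean_le_arith_mean_weighted s (fun _ => (n : ℝ)⁻¹) z hw hw' hz
  have hLHS : (∏ i ∈ s, z i ^ ((n : ℝ)⁻¹)) ^ n = ∏ i ∈ s, z i := by
    rw [← Finset.prod_pow]
    refine Finset.prod_congr rfl fun i hi => ?_
    rw [← Real.rpow_natCast (z i ^ ((n:ℝ)⁻¹)) n, ← Real.rpow_mul (hz i hi),
      inv_mul_cancel₀ hnR.ne', Real.rpow_one]
  have hprodnn : 0 ≤ ∏ i ∈ s, z i ^ ((n : ℝ)⁻¹) :=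
    Finset.prod_nonneg fun i hi => Real.rpow_nonneg (hz i hi) _
  calc ∏ i ∈ s, z i = (∏ i ∈ s, z i ^ ((n : ℝ)⁻¹)) ^ n := hLHS.symm
    _ ≤ (∑ i ∈ s, (n:ℝ)⁻¹ * z i) ^ n := pow_le_pow_left₀ hprodnn h n
    _ = ((∑ i ∈ s, z i) / n) ^ n := by
        rw [← Finset.mul_sum, inv_mul_eq_div]

/-- Induction step in the proof of Theorem 2 (via AM-GM). -/
theorem stmt_10 (l : ℕ) (hl : 0 < l) (α : ℝ) (hα0 : 0 < α) (hα1 : α ≤ 1)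
    (V : ℝ) (hV : 0 ≤ V)
    (k : ℕ → ℕ) (hk : ∀ s, 1 ≤ s → 1 ≤ k s ∧ k s ≤ l)
    (b : ℕ → ℝ) (hb0 : 0 ≤ b 0)
    (hrec : ∀ s, b (s + 1) ≥ (α * (k (s + 1) : ℝ) / l) * V
      + (1 - α * (k (s + 1) : ℝ) / l) * b s) :
    ∀ s, 1 ≤ s →
      b s ≥ (1 - (1 - α * (∑ i ∈ Finset.Icc 1 s, (k i : ℝ)) / (s * l)) ^ s) * V := by
  have hlR : (0 : ℝ) < l := by exact_mod_cast hl
  -- the per-step rates are in [0,1]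
  have hc : ∀ i, 1 ≤ i → 0 ≤ 1 - α * (k i : ℝ) / l ∧ α * (k i : ℝ) / l ≤ 1 := by
    intro i hi
    have hkl : (k i : ℝ) ≤ l := by exact_mod_cast (hk i hi).2
    have hknn : (0 : ℝ) ≤ k i := Nat.cast_nonneg _
    have : α * (k i : ℝ) / l ≤ 1 := by
      rw [div_le_one hlR]
      calc α * (k i : ℝ) ≤ 1 * (l : ℝ) := mul_le_mul hα1 hkl hknn zero_le_one
        _ = l := one_mul _
    exact ⟨by linarith, this⟩
  -- main induction: b s ≥ (1 - ∏ (1 - α k_i / l)) V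
  have key : ∀ s, b s ≥ (1 - ∏ i ∈ Finset.Icc 1 s, (1 - α * (k i : ℝ) / l)) * V := by
    intro s
    induction s with
    | zero => simp [hb0]
    | succ n ih =>
      have hrn := hrec n
      set c : ℝ := α * (k (n + 1) : ℝ) / l with hcdef
      have hc1 : 0 ≤ 1 - c ∧ c ≤ 1 := hc (n + 1) (Nat.le_add_left 1 n)
      have hprod : ∏ i ∈ Finset.Icc 1 (n + 1), (1 - α * (k i : ℝ) / l)
          = (∏ i ∈ Finset.Icc 1 n, (1 - α * (k i : ℝ) / l)) * (1 - c) := by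
        rw [← Finset.prod_Icc_succ_top (Nat.le_add_left 1 n)]
      have h2 : (1 - c) * b n ≥ (1 - c) * ((1 - ∏ i ∈ Finset.Icc 1 n, (1 - α * (k i : ℝ) / l)) * V) :=
        mul_le_mul_of_nonneg_left ih hc1.1
      rw [hprod]
      nlinarith [h2, hrn]
  -- now combine with AM-GM
  intro s hs
  have hsR : (0 : ℝ) < (s : ℝ) := by exact_mod_cast hs
  have hcard : (Finset.Icc 1 s).card = s := by
    rw [Nat.card_Icc]; omega
  have hamgm : ∏ i ∈ Finset.Icc 1 s, (1 - α * (k i : ℝ) / l)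
      ≤ (1 - α * (∑ i ∈ Finset.Icc 1 s, (k i : ℝ)) / (s * l)) ^ s := by
    have h := prod_le_avg_pow (Finset.Icc 1 s) (fun i => 1 - α * (k i : ℝ) / l)
      (fun i hi => (hc i (Finset.mem_Icc.mp hi).1).1) (by rw [hcard]; exact hs)
    rw [hcard] at h
    have hsum : ∑ i ∈ Finset.Icc 1 s, (1 - α * (k i : ℝ) / l)
        = s - α * (∑ i ∈ Finset.Icc 1 s, (k i : ℝ)) / l := by
      rw [Finset.sum_sub_distrib, Finset.sum_const, hcard, nsmul_eq_mul, mul_one,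
        Finset.mul_sum]
      congr 1
      rw [← Finset.sum_div, ← Finset.mul_sum]
    rw [hsum] at h
    have hbase : ((s : ℝ) - α * (∑ i ∈ Finset.Icc 1 s, (k i : ℝ)) / l) / s
        = 1 - α * (∑ i ∈ Finset.Icc 1 s, (k i : ℝ)) / (s * l) := by
      rw [sub_div, div_self hsR.ne', div_div, mul_comm (l : ℝ) (s : ℝ)]
    rwa [hbase] at h
  have hfinal : (1 - (1 - α * (∑ i ∈ Finset.Icc 1 s, (k i : ℝ)) / (s * l)) ^ s) * V
      ≤ (1 - ∏ i ∈ Finset.Icc 1 s, (1 - α * (k i : ℝ) / l)) * V := by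
    apply mul_le_mul_of_nonneg_right _ hV
    linarith
  exact le_trans hfinal (key s)
end

section
/- (Lemma 5, greedy step of generalized LDGM under additive noise) Let f : ℝ^n → ℝ be monotone on the nonnegative orthant with DR-submodularity ratio at least β, where 0 < β ≤ 1. Let e_1, …, e_m ∈ ℝ^n be nonnegative vectors, let γ and l be positive integers with γ dividing l, let i_1, …, i_{l/γ} ∈ {1, …, m}, and set v*_γ = Σ_{j=1}^{l/γ} γ·e_{i_j}. Let x be a nonnegative vector, let ε_1, …, ε_m be reals, and let i* ∈ {1, …, m} satisfy f(x + γ·e_{i*}) + ε_{i*} ≥ f(x + γ·e_i) + ε_i for all i ∈ {1, …, m}. Then f(x + e_{i*}) − f(x) ≥ (β²/l)·(f(v*_γ) − f(x)) − (β/l)·Σ_{j=1}^{l/γ} (ε_{i*} − ε_{i_j}). -/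
/-- Lemma 5: greedy step of generalized LDGM under additive noise. -/
theorem stmt_12 {n m : ℕ} (f : (Fin n → ℝ) → ℝ) (β : ℝ) (hβ0 : 0 < β) (hβ1 : β ≤ 1)
    (hmono : ∀ x y : Fin n → ℝ, 0 ≤ x → x ≤ y → f x ≤ f y)
    (hDR : ∀ x y : Fin n → ℝ, 0 ≤ x → x ≤ y → ∀ k : ℝ, 0 ≤ k → ∀ i : Fin n,
      f (x + k • (Pi.single i 1 : Fin n → ℝ)) - f x ≥ β * (f (y + k • (Pi.single i 1 : Fin n → ℝ)) - f y))
    (e : Fin m → Fin n → ℝ) (hpos : ∀ i, 0 ≤ e i)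
    (γ l : ℕ) (hγ : 0 < γ) (hl : 0 < l) (hdvd : γ ∣ l)
    (idx : Fin (l / γ) → Fin m)
    (x : Fin n → ℝ) (hx : 0 ≤ x)
    (eps : Fin m → ℝ)
    (istar : Fin m)
    (hbest : ∀ i : Fin m,
      f (x + (γ : ℝ) • e i) + eps i ≤ f (x + (γ : ℝ) • e istar) + eps istar) :
    f (x + e istar) - f x
      ≥ (β ^ 2 / l) * (f (∑ j, (γ : ℝ) • e (idx j)) - f x)
        - (β / l) * ∑ j, (eps istar - eps (idx j)) := by
  -- Lemma A: weak DR for vector increments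
  have hsingle : ∀ i : Fin n, (0 : Fin n → ℝ) ≤ Pi.single i 1 := by
    intro i j
    simp only [Pi.zero_apply, Pi.single_apply]
    split <;> norm_num
  have lemA : ∀ a b w : Fin n → ℝ, 0 ≤ a → a ≤ b → 0 ≤ w →
      β * (f (b + w) - f b) ≤ f (a + w) - f a := by
    intro a b w ha hab hw
    have key : ∀ s : Finset (Fin n),
        β * (f (b + ∑ i ∈ s, w i • (Pi.single i 1 : Fin n → ℝ)) - f b)
          ≤ f (a + ∑ i ∈ s, w i • (Pi.single i 1 : Fin n → ℝ)) - f a := by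
      intro s
      induction s using Finset.induction_on with
      | empty => simp
      | @insert c s' hc ih =>
        rw [Finset.sum_insert hc]
        set S := ∑ i ∈ s', w i • (Pi.single i 1 : Fin n → ℝ) with hS
        have hS0 : 0 ≤ S := by
          apply Finset.sum_nonneg
          intro i _
          exact smul_nonneg (hw i) (hsingle i)
        have haS : (0 : Fin n → ℝ) ≤ a + S := add_nonneg ha hS0
        have hab' : a + S ≤ b + S := add_le_add_left hab S
        have hdr := hDR (a + S) (b + S) haS hab' (w c) (hw c) c
        have e1 : a + (w c • (Pi.single c 1 : Fin n → ℝ) + S)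
            = (a + S) + w c • (Pi.single c 1 : Fin n → ℝ) := by
          rw [add_comm (w c • (Pi.single c 1 : Fin n → ℝ)) S, ← add_assoc]
        have e2 : b + (w c • (Pi.single c 1 : Fin n → ℝ) + S)
            = (b + S) + w c • (Pi.single c 1 : Fin n → ℝ) := by
          rw [add_comm (w c • (Pi.single c 1 : Fin n → ℝ)) S, ← add_assoc]
        rw [e1, e2]
        nlinarith [ih, hdr]
    have hw' : ∑ i : Fin n, w i • (Pi.single i 1 : Fin n → ℝ) = w := by
      funext j
      simp [Pi.single_apply, Finset.sum_ite_eq']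
    have := key Finset.univ
    rwa [hw'] at this
  -- Lemma B: repeated addition
  have lemB : ∀ w : Fin n → ℝ, 0 ≤ w → ∀ k : ℕ,
      β * (f (x + (k : ℝ) • w) - f x) ≤ (k : ℝ) * (f (x + w) - f x) := by
    intro w hw k
    induction k with
    | zero => simp
    | succ k ih =>
      have hk : (0 : Fin n → ℝ) ≤ (k : ℝ) • w := smul_nonneg (by positivity) hw
      have h1 := lemA x (x + (k : ℝ) • w) w hx (le_add_of_nonneg_right hk) hw
      have e1 : x + ((k : ℕ) + 1 : ℝ) • w = (x + (k : ℝ) • w) + w := by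
        rw [add_smul, one_smul, ← add_assoc]
      push_cast
      rw [e1]
      push_cast at ih
      nlinarith [h1, ih]
  -- Lemma C: telescoping the optimum
  have lemC : ∀ s : Finset (Fin (l / γ)),
      β * (f (x + ∑ j ∈ s, (γ : ℝ) • e (idx j)) - f x)
        ≤ ∑ j ∈ s, (f (x + (γ : ℝ) • e (idx j)) - f x) := by
    intro s
    induction s using Finset.induction_on with
    | empty => simp
    | @insert c s' hc ih =>
      rw [Finset.sum_insert hc, Finset.sum_insert hc]
      set S := ∑ j ∈ s', (γ : ℝ) • e (idx j) with hS
      have hS0 : 0 ≤ S := by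
        apply Finset.sum_nonneg
        intro j _
        exact smul_nonneg (by positivity) (hpos (idx j))
      have hwc : (0 : Fin n → ℝ) ≤ (γ : ℝ) • e (idx c) :=
        smul_nonneg (by positivity) (hpos (idx c))
      have h1 := lemA x (x + S) ((γ : ℝ) • e (idx c)) hx (le_add_of_nonneg_right hS0) hwc
      have e1 : x + ((γ : ℝ) • e (idx c) + S) = (x + S) + (γ : ℝ) • e (idx c) := by
        rw [add_comm ((γ : ℝ) • e (idx c)) S, ← add_assoc]
      rw [e1]
      nlinarith [h1, ih]
  set v : Fin n → ℝ := ∑ j, (γ : ℝ) • e (idx j) with hv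
  have hv0 : (0 : Fin n → ℝ) ≤ v := by
    apply Finset.sum_nonneg
    intro j _
    exact smul_nonneg (by positivity) (hpos (idx j))
  set A := f (x + e istar) - f x with hA
  set B := f v - f x with hB
  set C := ∑ j, (eps istar - eps (idx j)) with hC
  set D := f (x + (γ : ℝ) • e istar) - f x with hD
  -- f v ≤ f (x + v)
  have h1 : f v ≤ f (x + v) := hmono v (x + v) hv0 (le_add_of_nonneg_left hx)
  have h2 := lemC Finset.univ
  have h3 : ∑ j, (f (x + (γ : ℝ) • e (idx j)) - f x)
      ≤ ((l / γ : ℕ) : ℝ) * D + C := by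
    have hle : ∀ j : Fin (l / γ), f (x + (γ : ℝ) • e (idx j)) - f x
        ≤ D + (eps istar - eps (idx j)) := by
      intro j
      have := hbest (idx j)
      simp only [hD]
      linarith
    calc ∑ j, (f (x + (γ : ℝ) • e (idx j)) - f x)
        ≤ ∑ j, (D + (eps istar - eps (idx j))) := Finset.sum_le_sum fun j _ => hle j
      _ = ((l / γ : ℕ) : ℝ) * D + C := by
          rw [Finset.sum_add_distrib, Finset.sum_const, Finset.card_univ, Fintype.card_fin,
            nsmul_eq_mul, hC]
  have h4 := lemB (e istar) (hpos istar) γ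
  -- combine
  have hNγ : ((l / γ : ℕ) : ℝ) * (γ : ℝ) = (l : ℝ) := by
    rw [← Nat.cast_mul, Nat.div_mul_cancel hdvd]
  have s1 : β * B ≤ β * (f (x + v) - f x) :=
    mul_le_mul_of_nonneg_left (by rw [hB]; linarith) hβ0.le
  have s2 : β * (f (x + v) - f x) ≤ ((l / γ : ℕ) : ℝ) * D + C := le_trans h2 h3
  have s3 : β * (β * B) ≤ β * (((l / γ : ℕ) : ℝ) * D + C) :=
    mul_le_mul_of_nonneg_left (le_trans s1 s2) hβ0.le
  have s4 : ((l / γ : ℕ) : ℝ) * (β * D) ≤ ((l / γ : ℕ) : ℝ) * ((γ : ℝ) * A) :=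
    mul_le_mul_of_nonneg_left h4 (Nat.cast_nonneg (l / γ))
  have s5 : ((l / γ : ℕ) : ℝ) * ((γ : ℝ) * A) = (l : ℝ) * A := by
    rw [← mul_assoc, hNγ]
  have hfin : β ^ 2 * B - β * C ≤ (l : ℝ) * A := by nlinarith [s3, s4, s5]
  have hl' : (0 : ℝ) < (l : ℝ) := by exact_mod_cast hl
  rw [ge_iff_le, div_mul_eq_mul_div, div_mul_eq_mul_div, ← sub_div,
    div_le_iff₀ hl']
  linarith [hfin]
end

section
/- (Lemma 9, greedy step of modified LDGM under a box constraint) Let f : ℝ^n → ℝ be monotone on the nonnegative orthant with DR-submodularity ratio at least β, where 0 < β ≤ 1. Let s_1, …, s_n > 0 and set 𝓔 = {s_i·χ_i : i ∈ {1, …, n}}. Let c ∈ ℝ^n with c ≥ 0 and C = {z ∈ ℝ^n : 0 ≤ z ≤ c}. Let l be a positive integer, let k_1, …, k_n ∈ ℕ with k_1 + ⋯ + k_n = l, and set v* = Σ_i k_i·s_i·χ_i; assume v* ∈ C. Let t_1, …, t_n ∈ ℕ, set x = Σ_i t_i·s_i·χ_i, and assume x ∈ C. Suppose e* ∈ 𝓔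 satisfies x + e* ∈ C and f(x + e*) ≥ f(x + e) for every e ∈ 𝓔 with x + e ∈ C. Then f(x + e*) − f(x) ≥ (β/l)·(f(v*) − f(x)). -/
lemma sumv_apply {n : ℕ} (a : Fin n → ℝ) (j : Fin n) :
    (∑ i, (a i) • (Pi.single i (1:ℝ) : Fin n → ℝ)) j = a j := by
  simp [Finset.sum_apply, Pi.single_apply]

/-- Lemma 9: greedy step of modified LDGM under a box constraint. -/
theorem stmt_16 {n : ℕ} (f : (Fin n → ℝ) → ℝ) (β : ℝ) (hβ0 : 0 < β) (hβ1 : β ≤ 1)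
    (hmono : ∀ x y : Fin n → ℝ, 0 ≤ x → x ≤ y → f x ≤ f y)
    (hDR : ∀ x y : Fin n → ℝ, 0 ≤ x → x ≤ y → ∀ k : ℝ, 0 ≤ k → ∀ i : Fin n,
      f (x + k • (Pi.single i 1 : Fin n → ℝ)) - f x ≥ β * (f (y + k • (Pi.single i 1 : Fin n → ℝ)) - f y))
    (s : Fin n → ℝ) (hs : ∀ i, 0 < s i)
    (c : Fin n → ℝ) (hc : 0 ≤ c)
    (l : ℕ) (hl : 0 < l)
    (k : Fin n → ℕ) (hk : ∑ i, k i = l)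
    (vstar : Fin n → ℝ) (hv : vstar = ∑ i, ((k i : ℝ) * s i) • (Pi.single i 1 : Fin n → ℝ))
    (hvC : 0 ≤ vstar ∧ vstar ≤ c)
    (t : Fin n → ℕ) (x : Fin n → ℝ)
    (hx : x = ∑ i, ((t i : ℝ) * s i) • (Pi.single i 1 : Fin n → ℝ))
    (hxC : 0 ≤ x ∧ x ≤ c)
    (estar : Fin n → ℝ) (hestar : ∃ i : Fin n, estar = s i • (Pi.single i 1 : Fin n → ℝ))
    (hfeas : 0 ≤ x + estar ∧ x + estar ≤ c)
    (hbest : ∀ i : Fin n, 0 ≤ x + s i • (Pi.single i 1 : Fin n → ℝ) → x + s i • (Pi.single i 1 : Fin n → ℝ) ≤ c →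
      f (x + s i • (Pi.single i 1 : Fin n → ℝ)) ≤ f (x + estar)) :
    f (x + estar) - f x ≥ (β / l) * (f vstar - f x) := by
  obtain ⟨i0, he⟩ := hestar
  have hxj : ∀ j, x j = (t j : ℝ) * s j := by
    intro j; rw [hx, sumv_apply]
  have hvj : ∀ j, vstar j = (k j : ℝ) * s j := by
    intro j; rw [hv, sumv_apply]
  set D := f (x + estar) - f x with hD
  have hestarnn : (0:Fin n → ℝ) ≤ estar := by
    rw [he]; intro j
    simp only [Pi.zero_apply, Pi.smul_apply, Pi.single_apply, smul_eq_mul]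
    split_ifs with h
    · simpa [h] using (hs i0).le
    · simp
  have hDnn : 0 ≤ D := by
    have := hmono x (x + estar) hxC.1 (by intro j; simpa using hestarnn j)
    linarith
  -- key induction
  have key : ∀ N : ℕ, ∀ g : Fin n → ℕ, (∀ i, g i ≤ k i - t i) → ∑ i, g i = N →
      f (x + ∑ i, ((g i : ℝ) * s i) • (Pi.single i 1 : Fin n → ℝ)) - f x ≤ (N : ℝ) / β * D := by
    intro N
    induction N with
    | zero =>
      intro g hg hsum
      have hg0 : ∀ i, g i = 0 := by
        intro i
        exact Finset.sum_eq_zero_iff.mp hsum i (Finset.mem_univ i)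
      have : (∑ i, ((g i : ℝ) * s i) • (Pi.single i 1 : Fin n → ℝ)) = 0 := by
        funext j; rw [sumv_apply]; simp [hg0 j]
      rw [this]
      simp
    | succ N ih =>
      intro g hg hsum
      have hex : ∃ i, 0 < g i := by
        by_contra h
        push_neg at h
        have : ∑ i, g i = 0 := Finset.sum_eq_zero (fun i _ => Nat.le_zero.mp (h i))
        omega
      obtain ⟨i, hi⟩ := hex
      set g' := Function.update g i (g i - 1) with hg'
      have hsum' : ∑ j, g' j = N := by
        have h1 : ∑ j, g' j = (g i - 1) + ∑ j ∈ Finset.univ \ {i}, g j := by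
          rw [hg', Finset.sum_update_of_mem (Finset.mem_univ i)]
        have h2 : ∑ j, g j = (∑ j ∈ Finset.univ \ {i}, g j) + g i :=
          Finset.sum_eq_sum_sdiff_singleton_add (Finset.mem_univ i) g
        omega
      have hg'le : ∀ j, g' j ≤ k j - t j := by
        intro j
        rcases eq_or_ne j i with rfl | hji
        · have := hg j; simp [hg']; omega
        · simp [hg', Function.update_of_ne hji]; exact hg j
      set y := x + ∑ j, ((g' j : ℝ) * s j) • (Pi.single j 1 : Fin n → ℝ) with hy
      have hyj : ∀ j, y j = x j + (g' j : ℝ) * s j := by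
        intro j; rw [hy, Pi.add_apply, sumv_apply]
      have hxy : x ≤ y := by
        intro j; rw [hyj j]
        have : 0 ≤ (g' j : ℝ) * s j := mul_nonneg (Nat.cast_nonneg _) (hs j).le
        linarith
      have hveq : y + s i • (Pi.single i 1 : Fin n → ℝ)
          = x + ∑ j, ((g j : ℝ) * s j) • (Pi.single j 1 : Fin n → ℝ) := by
        funext j
        rw [Pi.add_apply, Pi.add_apply, sumv_apply, hyj j, Pi.smul_apply, smul_eq_mul,
          Pi.single_apply]
        rcases eq_or_ne j i with rfl | hji
        · rw [if_pos rfl, hg', Function.update_self]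
          have hc1 : ((g j - 1 : ℕ) : ℝ) = (g j : ℝ) - 1 := by
            rw [Nat.cast_sub hi]; simp
          rw [hc1]; ring
        · rw [if_neg hji, hg', Function.update_of_ne hji]; ring
      -- feasibility of x + s i • χ i
      have hti : t i + 1 ≤ k i := by
        have := hg i; omega
      have hfeas1 : 0 ≤ x + s i • (Pi.single i 1 : Fin n → ℝ) := by
        intro j
        rw [Pi.add_apply, Pi.smul_apply, smul_eq_mul, Pi.single_apply]
        have hxnn := hxC.1 j
        simp only [Pi.zero_apply] at hxnn ⊢
        split_ifs with h
        · nlinarith [hs i]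
        · simpa using hxnn
      have hfeas2 : x + s i • (Pi.single i 1 : Fin n → ℝ) ≤ c := by
        intro j
        rw [Pi.add_apply, Pi.smul_apply, smul_eq_mul, Pi.single_apply]
        rcases eq_or_ne j i with rfl | hji
        · rw [if_pos rfl, mul_one]
          have h1 : x j + s j = ((t j : ℝ) + 1) * s j := by rw [hxj j]; ring
          have h2 : ((t j : ℝ) + 1) * s j ≤ (k j : ℝ) * s j := by
            apply mul_le_mul_of_nonneg_right _ (hs j).le
            exact_mod_cast hti
          have h3 := hvC.2 j
          rw [hvj j] at h3
          linarith
        · rw [if_neg hji, mul_zero, add_zero]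
          exact hxC.2 j
      have hb := hbest i hfeas1 hfeas2
      have hdr := hDR x y hxC.1 hxy (s i) (hs i).le i
      rw [hveq] at hdr
      -- f (x + Σ g) - f y ≤ D / β
      have hstep : f (x + ∑ j, ((g j : ℝ) * s j) • (Pi.single j 1 : Fin n → ℝ)) - f y ≤ D / β := by
        rw [ge_iff_le] at hdr
        rw [div_eq_mul_inv]
        rw [← le_div_iff₀' hβ0] at hdr
        calc f (x + ∑ j, ((g j : ℝ) * s j) • (Pi.single j 1 : Fin n → ℝ)) - f y
            ≤ (f (x + s i • (Pi.single i 1 : Fin n → ℝ)) - f x) / β := hdr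
          _ ≤ D * β⁻¹ := by
              rw [div_eq_mul_inv]
              apply mul_le_mul_of_nonneg_right _ (inv_nonneg.mpr hβ0.le)
              rw [hD]; linarith
      have hih := ih g' hg'le hsum'
      rw [← hy] at hih
      have : ((N:ℝ)+1) / β * D = (N:ℝ)/β * D + D/β := by
        field_simp
      push_cast
      rw [this]
      linarith
  -- apply key with g = k - t
  have hkey := key (∑ i, (k i - t i)) (fun i => k i - t i) (fun i => le_refl _) rfl
  set z := x + ∑ i, (((k i - t i : ℕ) : ℝ) * s i) • (Pi.single i 1 : Fin n → ℝ) with hz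
  have hzj : ∀ j, z j = x j + ((k j - t j : ℕ) : ℝ) * s j := by
    intro j; rw [hz, Pi.add_apply, sumv_apply]
  have hvz : vstar ≤ z := by
    intro j
    rw [hvj j, hzj j, hxj j]
    have h1 : (k j : ℝ) ≤ (t j : ℝ) + ((k j - t j : ℕ) : ℝ) := by
      have : k j ≤ t j + (k j - t j) := by omega
      exact_mod_cast this
    nlinarith [hs j]
  have hfv : f vstar ≤ f z := hmono vstar z hvC.1 hvz
  have hNl : (∑ i, (k i - t i) : ℕ) ≤ l := by
    rw [← hk]
    apply Finset.sum_le_sum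
    intro i _
    omega
  have hNl' : ((∑ i, (k i - t i) : ℕ) : ℝ) / β * D ≤ (l : ℝ) / β * D := by
    have : ((∑ i, (k i - t i) : ℕ) : ℝ) ≤ (l : ℝ) := by exact_mod_cast hNl
    gcongr
  have hfinal : f vstar - f x ≤ (l : ℝ) / β * D := by
    calc f vstar - f x ≤ f z - f x := by linarith
      _ ≤ ((∑ i, (k i - t i) : ℕ) : ℝ) / β * D := hkey
      _ ≤ (l : ℝ) / β * D := hNl'
  have hl' : (0:ℝ) < (l:ℝ) := by exact_mod_cast hl
  rw [ge_iff_le]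
  have h1 : (β / l) * (f vstar - f x) ≤ (β / l) * ((l : ℝ) / β * D) := by
    apply mul_le_mul_of_nonneg_left hfinal
    positivity
  have h2 : (β / l) * ((l : ℝ) / β * D) = D := by
    field_simp
  linarith
end

section
/- (Lemma 10, lattice approximation of the optimum under the constraint {a·x ≤ b, 0 ≤ x ≤ c}) Let a ∈ ℝ^n with a_i > 0 for all i, let b > 0, and set Q = {x ∈ ℝ^n : x ≥ 0 and ⟨a, x⟩ ≤ b}. Let c ∈ ℝ^n with c ≥ 0, C = {x ∈ ℝ^n : 0 ≤ x ≤ c}, and P = Q ∩ C. Let l be a positive integer, set r_i = (b/a_i)·χ_i and 𝓔 = {(1/l)·r_i : i ∈ {1, …, n}}, and let D ≥ 0 satisfy ‖x‖ ≤ D for all x ∈ Q. Then for every x* ∈ Frontier(P) there exist an integer 0 ≤ l' ≤ l and elements e'_1, …, e'_{l'} ∈ 𝓔 (repetitions allowed) such that v' = e'_1 + ⋯ + e'_{l'} belongs to P and ‖x* − v'‖ ≤ n·D/l. -/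
/-- Euclidean norm on `Fin n → ℝ`. -/
noncomputable def eucNorm {n : ℕ} (x : Fin n → ℝ) : ℝ :=
  Real.sqrt (∑ i, (x i) ^ 2)

/-- Lemma 10: lattice approximation of the optimum under the constraint
`{x : ⟨a,x⟩ ≤ b, 0 ≤ x ≤ c}`. -/
theorem stmt_17 {n : ℕ} (a : Fin n → ℝ) (ha : ∀ i, 0 < a i) (b : ℝ) (hb : 0 < b)
    (c : Fin n → ℝ) (hc : 0 ≤ c)
    (l : ℕ) (hl : 0 < l)
    (D : ℝ) (hD : 0 ≤ D)
    (hDb : ∀ x : Fin n → ℝ, 0 ≤ x → (∑ i, a i * x i) ≤ b → eucNorm x ≤ D) :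
    ∀ xstar : Fin n → ℝ,
      xstar ∈ maxFrontier
        {x : Fin n → ℝ | (0 ≤ x ∧ (∑ i, a i * x i) ≤ b) ∧ (0 ≤ x ∧ x ≤ c)} →
      ∃ l' : ℕ, l' ≤ l ∧ ∃ e' : Fin l' → Fin n → ℝ,
        (∀ j, ∃ i : Fin n, e' j = ((l : ℝ)⁻¹ * (b / a i)) • (Pi.single i 1 : Fin n → ℝ)) ∧
        (0 ≤ ∑ j, e' j ∧ (∑ i, a i * (∑ j, e' j) i) ≤ b ∧
          (0 ≤ ∑ j, e' j ∧ ∑ j, e' j ≤ c)) ∧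
        eucNorm (xstar - ∑ j, e' j) ≤ n * D / l := by
  intro xstar hx
  obtain ⟨⟨⟨hx0, hxb⟩, _, hxc⟩, -⟩ := hx
  have hl' : (0:ℝ) < l := by exact_mod_cast hl
  -- floor coefficients
  set k : Fin n → ℕ := fun i => ⌊(l * a i * xstar i) / b⌋₊ with hkdef
  have hfloor_le : ∀ i, (k i : ℝ) ≤ l * a i * xstar i / b := fun i =>
    Nat.floor_le (div_nonneg (mul_nonneg (mul_nonneg (le_of_lt hl') (ha i).le) (hx0 i)) hb.le)
  have hfloor_gt : ∀ i, l * a i * xstar i / b < (k i : ℝ) + 1 := fun i =>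
    Nat.lt_floor_add_one _
  -- b / a i ≤ D
  have hbaD : ∀ i, b / a i ≤ D := by
    intro i
    have h0 : (0:Fin n → ℝ) ≤ (Pi.single i (b / a i) : Fin n → ℝ) := by
      intro j
      simp only [Pi.zero_apply, Pi.single_apply]
      split
      · exact div_nonneg hb.le (ha i).le
      · exact le_refl 0
    have hsum : (∑ j, a j * (Pi.single i (b / a i) : Fin n → ℝ) j) ≤ b := by
      rw [Finset.sum_eq_single i]
      · rw [Pi.single_eq_same]
        rw [mul_div_cancel₀ _ (ha i).ne']
      · intro j _ hji
        rw [Pi.single_apply, if_neg hji, mul_zero]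
      · simp
    have := hDb _ h0 hsum
    have he : eucNorm ((Pi.single i (b / a i) : Fin n → ℝ)) = b / a i := by
      unfold eucNorm
      rw [Finset.sum_eq_single i]
      · rw [Pi.single_eq_same, Real.sqrt_sq (div_nonneg hb.le (ha i).le)]
      · intro j _ hji
        rw [Pi.single_apply, if_neg hji]; ring
      · simp
    rwa [he] at this
  -- key coordinate bounds for v i := k i * b / (l * a i)
  have hvle : ∀ i, (k i : ℝ) * b / (l * a i) ≤ xstar i := by
    intro i
    rw [div_le_iff₀ (mul_pos hl' (ha i))]
    have := (le_div_iff₀ hb).mp (hfloor_le i)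
    nlinarith [this]
  have hvgt : ∀ i, xstar i - (k i : ℝ) * b / (l * a i) ≤ D / l := by
    intro i
    have h1 : l * a i * xstar i < ((k i : ℝ) + 1) * b := by
      have := (div_lt_iff₀ hb).mp (hfloor_gt i)
      linarith
    have h2 : xstar i - (k i : ℝ) * b / (l * a i) ≤ b / (l * a i) := by
      rw [sub_le_iff_le_add, ← add_div, le_div_iff₀ (mul_pos hl' (ha i))]
      nlinarith
    refine h2.trans ?_
    rw [div_le_div_iff₀ (mul_pos hl' (ha i)) hl']
    have := hbaD i
    rw [div_le_iff₀ (ha i)] at this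
    nlinarith [ha i, hl']
  -- sum of k is at most l
  have hksum : ∑ i, k i ≤ l := by
    have hr : (∑ i, (k i : ℝ)) * b ≤ l * b := by
      rw [Finset.sum_mul]
      calc ∑ i, (k i : ℝ) * b ≤ ∑ i, (l : ℝ) * (a i * xstar i) := by
            apply Finset.sum_le_sum
            intro i _
            have := (le_div_iff₀ hb).mp (hfloor_le i)
            nlinarith
        _ = l * ∑ i, a i * xstar i := by rw [Finset.mul_sum]
        _ ≤ l * b := by nlinarith
    have : (∑ i, (k i : ℝ)) ≤ l := le_of_mul_le_mul_right hr hb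
    exact_mod_cast (by push_cast at this ⊢; exact this : ((∑ i, k i : ℕ) : ℝ) ≤ (l : ℝ))
  refine ⟨∑ i, k i, hksum, ?_⟩
  -- the equivalence to index the multiset
  have hcard : Fintype.card ((i : Fin n) × Fin (k i)) = ∑ i, k i := by
    simp [Fintype.card_sigma]
  let E := Fintype.equivFinOfCardEq hcard
  set f : Fin n → Fin n → ℝ := fun i => ((l : ℝ)⁻¹ * (b / a i)) • (Pi.single i 1 : Fin n → ℝ)
    with hfdef
  refine ⟨fun j => f (E.symm j).1, fun j => ⟨(E.symm j).1, rfl⟩, ?_⟩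
  have hsum : (∑ j, f (E.symm j).1) = ∑ i, (k i) • f i := by
    rw [← E.sum_comp (fun j => f (E.symm j).1)]
    simp only [Equiv.symm_apply_apply]
    rw [← Finset.univ_sigma_univ, Finset.sum_sigma]
    simp [Finset.sum_const]
  have hvi : ∀ i, (∑ j, f (E.symm j).1) i = (k i : ℝ) * b / (l * a i) := by
    intro i
    rw [hsum]
    rw [Finset.sum_apply]
    rw [Finset.sum_eq_single i]
    · simp only [hfdef, Pi.smul_apply, Pi.single_eq_same, smul_eq_mul, nsmul_eq_mul]
      field_simp
    · intro j _ hji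
      simp [hfdef, Pi.single_eq_of_ne, hji]
    · simp
  have hv0 : (0:Fin n → ℝ) ≤ ∑ j, f (E.symm j).1 := by
    intro i
    rw [hvi i]
    exact div_nonneg (mul_nonneg (Nat.cast_nonneg _) hb.le) (mul_nonneg hl'.le (ha i).le)
  have hvb : (∑ i, a i * (∑ j, f (E.symm j).1) i) ≤ b := by
    have : ∀ i, a i * (∑ j, f (E.symm j).1) i = (k i : ℝ) * b / l := by
      intro i
      rw [hvi i]
      field_simp [(ha i).ne', hl'.ne']
    rw [Finset.sum_congr rfl fun i _ => this i]
    rw [← Finset.sum_div, ← Finset.sum_mul]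
    rw [div_le_iff₀ hl']
    have : (∑ i, (k i : ℝ)) ≤ l := by
      exact_mod_cast (by push_cast; exact_mod_cast Nat.cast_le.mpr hksum : ((∑ i, k i : ℕ) : ℝ) ≤ (l:ℝ))
    nlinarith
  have hvc : (∑ j, f (E.symm j).1) ≤ c := by
    intro i
    rw [hvi i]
    exact (hvle i).trans (hxc i)
  refine ⟨⟨hv0, hvb, hv0, hvc⟩, ?_⟩
  -- norm bound
  unfold eucNorm
  have hterm : ∀ i, ((xstar - ∑ j, f (E.symm j).1) i) ^ 2 ≤ (D / l) ^ 2 := by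
    intro i
    have h1 : (xstar - ∑ j, f (E.symm j).1) i = xstar i - (k i : ℝ) * b / (l * a i) := by
      simp [hvi i]
    rw [h1]
    have h2 := hvgt i
    have h3 : 0 ≤ xstar i - (k i : ℝ) * b / (l * a i) := by linarith [hvle i]
    nlinarith
  have hsb : (∑ i, ((xstar - ∑ j, f (E.symm j).1) i) ^ 2) ≤ n * (D / l) ^ 2 := by
    calc (∑ i, ((xstar - ∑ j, f (E.symm j).1) i) ^ 2) ≤ ∑ _i : Fin n, (D / l) ^ 2 :=
          Finset.sum_le_sum fun i _ => hterm i
      _ = n * (D / l) ^ 2 := by simp [mul_comm]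
  calc Real.sqrt (∑ i, ((xstar - ∑ j, f (E.symm j).1) i) ^ 2)
      ≤ Real.sqrt ((n : ℝ) * (D / l) ^ 2) := Real.sqrt_le_sqrt hsb
    _ = Real.sqrt n * (D / l) := by
        rw [Real.sqrt_mul (Nat.cast_nonneg n), Real.sqrt_sq (by positivity)]
    _ ≤ n * (D / l) := by
        have : Real.sqrt n ≤ n := by
          have hn2 : (n:ℝ) ≤ (n:ℝ) ^ 2 := by
            exact_mod_cast Nat.le_self_pow two_ne_zero n
          calc Real.sqrt n ≤ Real.sqrt ((n:ℝ) ^ 2) := Real.sqrt_le_sqrt hn2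
            _ = n := Real.sqrt_sq (Nat.cast_nonneg n)
        have hDl : 0 ≤ D / l := by positivity
        nlinarith [Real.sqrt_nonneg (n:ℝ)]
    _ = n * D / l := by ring
end
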